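/- arXiv:1007.2114 — 7 statements merged into one kernel-verified Lean document; each statement's English description precedes it below -/
import Mathlib

section
/- Let s ∈ (0, 1/2). There exists c ∈ (0,1), depending only on n and s, such that for all disjoint measurable sets A, B ⊆ ℝ^n with 0 < |A| < ∞ and |B| ≤ c|A|, setting D := ℝ^n ∖ (A ∪ B), one has L(A,D) ≥ c |A|^{(n−2s)/n}. -/
open MeasureTheory ENNReal Filter Topology

noncomputable section

/-- The ambient Euclidean space. -/
abbrev Spc (n : ℕ) := EuclideanSpace ℝ (Fin n)

/-- The double integral `L(A,D) = ∫_A ∫_D |x-y|^{-(n+2s)} dy dx ∈ [0,∞]`. -/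
def Ldb (n : ℕ) (s : ℝ) (A D : Set (Spc n)) : ℝ≥0∞ :=
  ∫⁻ x in A, ∫⁻ y in D, ENNReal.ofReal (‖x - y‖ ^ (-((n : ℝ) + 2 * s)))

/-- `L(A,D) ≥ c|A|^{(n-2s)/n}` when `s ∈ (0,1/2)` and `|B| ≤ c|A|`. -/
theorem L_lower_bound_subcritical (n : ℕ) (hn : 2 ≤ n) (s : ℝ)
    (hs : s ∈ Set.Ioo (0 : ℝ) (1 / 2)) :
    ∃ c ∈ Set.Ioo (0 : ℝ) 1, ∀ A B : Set (Spc n), MeasurableSet A → MeasurableSet B →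
      Disjoint A B → 0 < volume A → volume A < ⊤ →
      volume B ≤ ENNReal.ofReal c * volume A →
      ENNReal.ofReal (c * (volume A).toReal ^ (((n : ℝ) - 2 * s) / n)) ≤
        Ldb n s A (A ∪ B)ᶜ := by
  obtain ⟨hs0, hs12⟩ := hs
  have hn0 : (0:ℝ) < n := by
    have : 0 < n := lt_of_lt_of_le two_pos hn
    exact_mod_cast this
  have hnne : n ≠ 0 := by omega
  set κ : ℝ≥0∞ := volume (Metric.ball (0 : Spc n) 1) with hκdef
  have hκ0 : 0 < κ := Metric.measure_ball_pos volume 0 one_pos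
  have hκtop : κ < ⊤ := measure_ball_lt_top
  set k : ℝ := κ.toReal with hkdef
  have hk0 : 0 < k := ENNReal.toReal_pos hκ0.ne' hκtop.ne
  set p : ℝ := (n : ℝ) + 2 * s with hpdef
  have hp0 : 0 < p := by positivity
  set C0 : ℝ := (2 / k) ^ (-(p / n)) / 2 with hC0def
  have hC0 : 0 < C0 := by positivity
  set c : ℝ := min (1 / 2) C0 with hcdef
  have hc0 : 0 < c := lt_min (by norm_num) hC0
  have hc1 : c < 1 := lt_of_le_of_lt (min_le_left _ _) (by norm_num)
  refine ⟨c, ⟨hc0, hc1⟩, ?_⟩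
  intro A B hA hB hABdisj hA0 hAtop hBle
  set μA : ℝ≥0∞ := volume A with hμAdef
  set t : ℝ := μA.toReal with htdef
  have ht0 : 0 < t := ENNReal.toReal_pos hA0.ne' hAtop.ne
  have hμA : μA = ENNReal.ofReal t := (ENNReal.ofReal_toReal hAtop.ne).symm
  set r : ℝ := (2 * t / k) ^ ((n : ℝ)⁻¹) with hrdef
  have hbase0 : 0 < 2 * t / k := by positivity
  have hr0 : 0 < r := Real.rpow_pos_of_pos hbase0 _
  -- volume of balls of radius r
  have hball : ∀ x : Spc n, volume (Metric.ball x r) = 2 * μA := by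
    intro x
    rw [Measure.addHaar_ball_of_pos volume x hr0, finrank_euclideanSpace_fin,
      Real.rpow_inv_natCast_pow hbase0.le hnne]
    have hκk : κ = ENNReal.ofReal k := (ENNReal.ofReal_toReal hκtop.ne).symm
    rw [← hκdef, hκk, ← ENNReal.ofReal_mul hbase0.le, div_mul_cancel₀ _ hk0.ne',
      ENNReal.ofReal_mul (by norm_num : (0:ℝ) ≤ 2), hμA, ENNReal.ofReal_ofNat]
  -- measure of B bound
  have hμAB : volume (A ∪ B) ≤ μA + ENNReal.ofReal c * μA :=
    (measure_union_le A B).trans (add_le_add (le_refl μA) hBle)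
  have hABtop : volume (A ∪ B) ≠ ⊤ :=
    ne_top_of_le_ne_top
      (ENNReal.add_ne_top.mpr ⟨hAtop.ne, ENNReal.mul_ne_top ENNReal.ofReal_ne_top hAtop.ne⟩) hμAB
  have h2inv : (2⁻¹ : ℝ≥0∞) = ENNReal.ofReal 2⁻¹ := by
    rw [ENNReal.ofReal_inv_of_pos two_pos, ENNReal.ofReal_ofNat]
  have hcle : ENNReal.ofReal c ≤ (2⁻¹ : ℝ≥0∞) := by
    rw [h2inv]
    exact ENNReal.ofReal_le_ofReal ((min_le_left _ _).trans (by norm_num))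
  -- the key measure lower bound on D ∩ ball
  have hSx : ∀ x, (2⁻¹ : ℝ≥0∞) * μA ≤ volume ((A ∪ B)ᶜ ∩ Metric.ball x r) := by
    intro x
    have hcover : Metric.ball x r ⊆ ((A ∪ B)ᶜ ∩ Metric.ball x r) ∪ (A ∪ B) := by
      intro y hy
      by_cases h : y ∈ A ∪ B
      · exact Or.inr h
      · exact Or.inl ⟨h, hy⟩
    have h1 : 2 * μA ≤ volume ((A ∪ B)ᶜ ∩ Metric.ball x r) + volume (A ∪ B) := by
      rw [← hball x]
      exact (measure_mono hcover).trans (measure_union_le _ _)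
    have h2 : (2⁻¹ : ℝ≥0∞) * μA + volume (A ∪ B) ≤
        volume ((A ∪ B)ᶜ ∩ Metric.ball x r) + volume (A ∪ B) := by
      refine le_trans ?_ h1
      calc (2⁻¹ : ℝ≥0∞) * μA + volume (A ∪ B)
          ≤ 2⁻¹ * μA + (μA + ENNReal.ofReal c * μA) := add_le_add le_rfl hμAB
        _ ≤ 2⁻¹ * μA + (μA + 2⁻¹ * μA) := by gcongr
        _ = (2⁻¹ + 2⁻¹) * μA + μA := by ring
        _ = 2 * μA := by rw [ENNReal.inv_two_add_inv_two, one_mul, two_mul]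
    exact (ENNReal.add_le_add_iff_right hABtop).mp h2
  -- inner integral bound
  have hinner : ∀ x ∈ A, ENNReal.ofReal (r ^ (-p)) * (2⁻¹ * μA) ≤
      ∫⁻ y in (A ∪ B)ᶜ, ENNReal.ofReal (‖x - y‖ ^ (-p)) := by
    intro x hx
    have hDmeas : MeasurableSet ((A ∪ B)ᶜ ∩ Metric.ball x r) :=
      ((hA.union hB).compl).inter measurableSet_ball
    calc ENNReal.ofReal (r ^ (-p)) * (2⁻¹ * μA)
        ≤ ENNReal.ofReal (r ^ (-p)) * volume ((A ∪ B)ᶜ ∩ Metric.ball x r) := by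
          gcongr
          exact hSx x
      _ = ∫⁻ _ in (A ∪ B)ᶜ ∩ Metric.ball x r, ENNReal.ofReal (r ^ (-p)) :=
          (setLIntegral_const _ _).symm
      _ ≤ ∫⁻ y in (A ∪ B)ᶜ ∩ Metric.ball x r, ENNReal.ofReal (‖x - y‖ ^ (-p)) := by
          refine setLIntegral_mono' hDmeas fun y hy => ?_
          refine ENNReal.ofReal_le_ofReal ?_
          have hxney : x ≠ y := fun h => hy.1 (Or.inl (h ▸ hx))
          have hxy0 : 0 < ‖x - y‖ := by
            rw [norm_pos_iff]
            exact sub_ne_zero.mpr hxney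
          have hxyr : ‖x - y‖ ≤ r := by
            have h := Metric.mem_ball.mp hy.2
            calc ‖x - y‖ = dist x y := (dist_eq_norm x y).symm
              _ = dist y x := dist_comm _ _
              _ ≤ r := h.le
          exact Real.rpow_le_rpow_of_nonpos hxy0 hxyr (neg_nonpos.mpr hp0.le)
      _ ≤ ∫⁻ y in (A ∪ B)ᶜ, ENNReal.ofReal (‖x - y‖ ^ (-p)) :=
          lintegral_mono_set Set.inter_subset_left
  -- outer integral bound
  have houter : ENNReal.ofReal (r ^ (-p)) * (2⁻¹ * μA) * μA ≤ Ldb n s A (A ∪ B)ᶜ := by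
    unfold Ldb
    rw [← hpdef]
    calc ENNReal.ofReal (r ^ (-p)) * (2⁻¹ * μA) * μA
        = ∫⁻ _ in A, ENNReal.ofReal (r ^ (-p)) * (2⁻¹ * μA) := by
          rw [setLIntegral_const, ← hμAdef]
      _ ≤ ∫⁻ x in A, ∫⁻ y in (A ∪ B)ᶜ, ENNReal.ofReal (‖x - y‖ ^ (-p)) :=
          setLIntegral_mono' hA hinner
  -- real-number computation
  have hkey : c * t ^ (((n : ℝ) - 2 * s) / n) ≤ r ^ (-p) * (2⁻¹ * t) * t := by
    have h1 : r ^ (-p) = (2 * t / k) ^ (-(p / n)) := by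
      rw [hrdef, ← Real.rpow_mul hbase0.le]
      congr 1
      field_simp
    have h3 : r ^ (-p) = (2 / k) ^ (-(p / n)) * t ^ (-(p / n)) := by
      rw [h1, show (2 * t / k : ℝ) = (2 / k) * t by ring,
        Real.mul_rpow (by positivity) ht0.le]
    rw [h3]
    have h4 : (2 / k : ℝ) ^ (-(p / n)) * t ^ (-(p / n)) * (2⁻¹ * t) * t
        = C0 * t ^ (-(p / n) + 1 + 1) := by
      rw [Real.rpow_add ht0, Real.rpow_add ht0, Real.rpow_one, hC0def]
      ring
    have h5 : -(p / n) + 1 + 1 = ((n : ℝ) - 2 * s) / n := by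
      rw [hpdef]
      field_simp
      ring
    rw [h4, h5]
    exact mul_le_mul_of_nonneg_right (min_le_right _ _) (Real.rpow_nonneg ht0.le _)
  calc ENNReal.ofReal (c * t ^ (((n : ℝ) - 2 * s) / n))
      ≤ ENNReal.ofReal (r ^ (-p) * (2⁻¹ * t) * t) := ENNReal.ofReal_le_ofReal hkey
    _ = ENNReal.ofReal (r ^ (-p)) * (2⁻¹ * μA) * μA := by
        rw [ENNReal.ofReal_mul (by positivity : (0:ℝ) ≤ r ^ (-p) * (2⁻¹ * t)),
          ENNReal.ofReal_mul (by positivity : (0:ℝ) ≤ r ^ (-p)),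
          ENNReal.ofReal_mul (by norm_num : (0:ℝ) ≤ 2⁻¹), hμA, h2inv]
    _ ≤ Ldb n s A (A ∪ B)ᶜ := houter
end
end

section
/- Let s ∈ (0,1). There exists c ∈ (0,1), depending only on n and s, such that for all disjoint measurable sets A, B ⊆ ℝ^n with 0 < |A| < ∞ and c|A| < |B| < ∞, setting D := ℝ^n ∖ (A ∪ B), one has L(A,D) ≥ c |A|^{(n−2s)/n} (|B|/|A|)^{−2s/n}. -/
open MeasureTheory ENNReal Filter Topology

lemma aux_real (n : ℕ) (hn : 2 ≤ n) (s : ℝ) (hs0 : 0 < s) (hs1 : s < 1)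
    (κ : ℝ) (hκ : 0 < κ) (c : ℝ) (hc0 : 0 < c) (hc2 : c ≤ 1/2)
    (hcK : c ^ (1 - 2*s/n) ≤
      (2:ℝ) ^ (-((n:ℝ)+2*s)) * ((2:ℝ)^n - 1) * κ * (κ/2) ^ (2*s/n))
    (a b mR r : ℝ) (ha : 0 < a) (hb : 0 < b) (hab : c * a < b)
    (hm : mR ≤ a + b) (hm0 : 0 < mR) (hr : r = (mR/κ) ^ ((n:ℝ)⁻¹)) :
    c * a ^ (((n:ℝ) - 2*s)/n) * (b/a) ^ (-(2*s)/n) ≤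
      (2*r) ^ (-((n:ℝ)+2*s)) * ((2*r)^n * κ - r^n * κ) * a := by
  have hn0 : (0:ℝ) < n := by exact_mod_cast (by omega : 0 < n)
  set p : ℝ := 2*s/n with hp
  have hp0 : 0 < p := by positivity
  have hp1 : p < 1 := by
    rw [hp, div_lt_one hn0]
    have : (2:ℝ) ≤ n := by exact_mod_cast hn
    nlinarith
  have hr0 : 0 < r := by rw [hr]; positivity
  have hrn : r ^ (n:ℝ) = mR/κ := by
    rw [hr, ← Real.rpow_mul (by positivity), inv_mul_cancel₀ hn0.ne', Real.rpow_one]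
  -- LHS = c * a * b^(-p)
  have hLHS : c * a ^ (((n:ℝ) - 2*s)/n) * (b/a) ^ (-(2*s)/n) = c * a * b ^ (-p) := by
    have e1 : ((n:ℝ) - 2*s)/n = 1 + (-p) := by rw [hp]; field_simp; ring
    have e2 : -(2*s)/n = -p := by rw [hp, neg_div]
    rw [e1, e2, Real.rpow_add ha, Real.rpow_one,
      Real.div_rpow hb.le ha.le, Real.rpow_neg ha.le p]
    field_simp
  -- RHS = K0 * r^(-2s) * a
  have hXY : r ^ (-((n:ℝ)+2*s)) * r ^ (n:ℝ) = r ^ (-(2*s)) := by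
    rw [← Real.rpow_add hr0]; ring_nf
  have hRHS : (2*r) ^ (-((n:ℝ)+2*s)) * ((2*r)^n * κ - r^n * κ) * a
      = (2:ℝ) ^ (-((n:ℝ)+2*s)) * ((2:ℝ)^n - 1) * κ * r ^ (-(2*s)) * a := by
    rw [Real.mul_rpow (by norm_num) hr0.le, mul_pow, ← Real.rpow_natCast r n, ← hXY]
    ring
  rw [hLHS, hRHS]
  set K0 : ℝ := (2:ℝ) ^ (-((n:ℝ)+2*s)) * ((2:ℝ)^n - 1) * κ with hK0
  have hK0pos : 0 < K0 := by
    have h2n : (1:ℝ) < (2:ℝ)^n := one_lt_pow₀ (by norm_num) (by omega)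
    have h2q : (0:ℝ) < (2:ℝ) ^ (-((n:ℝ)+2*s)) := Real.rpow_pos_of_pos (by norm_num) _
    rw [hK0]
    exact mul_pos (mul_pos h2q (by linarith)) hκ
  have core : c * b ^ (-p) ≤ K0 * r ^ (-(2*s)) := by
    have hr2s : r ^ (-(2*s)) = (mR/κ) ^ (-p) := by
      rw [← hrn, ← Real.rpow_mul hr0.le]
      congr 1
      rw [hp]
      field_simp
    have hmle : mR/κ ≤ 2*b/(c*κ) := by
      have h1 : a ≤ b/c := by
        rw [le_div_iff₀ hc0]; nlinarith
      have h2 : b ≤ b/c := by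
        rw [le_div_iff₀ hc0]; nlinarith
      have : mR ≤ 2*b/c := by
        have := hm.trans (add_le_add h1 h2)
        calc mR ≤ b/c + b/c := this
        _ = 2*b/c := by ring
      calc mR/κ ≤ (2*b/c)/κ := by gcongr
        _ = 2*b/(c*κ) := by field_simp
    have h1 : (2*b/(c*κ)) ^ (-p) ≤ (mR/κ) ^ (-p) :=
      Real.rpow_le_rpow_of_nonpos (by positivity) hmle (by linarith)
    have h2 : (2*b/(c*κ)) ^ (-p) = (c*κ/2) ^ p * b ^ (-p) := by
      have : 2*b/(c*κ) = (2/(c*κ)) * b := by ring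
      rw [this, Real.mul_rpow (by positivity) hb.le,
        Real.rpow_neg (by positivity) p, ← Real.inv_rpow (by positivity), inv_div]
    have h3 : (c*κ/2) ^ p = c ^ p * (κ/2) ^ p := by
      rw [show c*κ/2 = c * (κ/2) by ring, Real.mul_rpow hc0.le (by positivity)]
    have h4 : c ≤ K0 * (κ/2) ^ p * c ^ p := by
      have := mul_le_mul_of_nonneg_right hcK (Real.rpow_pos_of_pos hc0 p).le
      calc c = c ^ ((1-p) + p) := by rw [show (1:ℝ)-p+p = 1 by ring, Real.rpow_one]
        _ = c ^ (1-p) * c ^ p := Real.rpow_add hc0 _ _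
        _ ≤ (K0 * (κ/2) ^ p) * c ^ p := this
    calc c * b ^ (-p) ≤ (K0 * (κ/2) ^ p * c ^ p) * b ^ (-p) := by
          have hbp : 0 < b ^ (-p) := Real.rpow_pos_of_pos hb _
          exact mul_le_mul_of_nonneg_right h4 hbp.le
      _ = K0 * ((c*κ/2) ^ p * b ^ (-p)) := by rw [h3]; ring
      _ = K0 * ((2*b/(c*κ)) ^ (-p)) := by rw [h2]
      _ ≤ K0 * ((mR/κ) ^ (-p)) := by gcongr
      _ = K0 * r ^ (-(2*s)) := by rw [hr2s]
  calc c * a * b ^ (-p) = (c * b ^ (-p)) * a := by ring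
    _ ≤ (K0 * r ^ (-(2*s))) * a := mul_le_mul_of_nonneg_right core ha.le
    _ = K0 * r ^ (-(2*s)) * a := by ring

noncomputable section

/-- `L(A,D) ≥ c|A|^{(n-2s)/n} (|B|/|A|)^{-2s/n}` when `|B| > c|A|`. -/
theorem L_lower_bound_large_B (n : ℕ) (hn : 2 ≤ n) (s : ℝ) (hs : s ∈ Set.Ioo (0 : ℝ) 1) :
    ∃ c ∈ Set.Ioo (0 : ℝ) 1, ∀ A B : Set (Spc n), MeasurableSet A → MeasurableSet B →
      Disjoint A B → 0 < volume A → volume A < ⊤ →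
      ENNReal.ofReal c * volume A < volume B → volume B < ⊤ →
      ENNReal.ofReal (c * (volume A).toReal ^ (((n : ℝ) - 2 * s) / n) *
          ((volume B).toReal / (volume A).toReal) ^ (-(2 * s) / n)) ≤
        Ldb n s A (A ∪ B)ᶜ := by
  obtain ⟨hs0, hs1⟩ := hs
  haveI : Nonempty (Fin n) := ⟨⟨0, by omega⟩⟩
  have hn0 : (0:ℝ) < n := by exact_mod_cast (by omega : 0 < n)
  set κ : ℝ := Real.sqrt Real.pi ^ n / Real.Gamma (n/2 + 1) with hκdef
  have hκ : 0 < κ := div_pos (pow_pos (Real.sqrt_pos.mpr Real.pi_pos) n)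
    (Real.Gamma_pos_of_pos (by positivity))
  set p : ℝ := 2*s/n with hp
  have hp0 : 0 < p := by positivity
  have hp1 : p < 1 := by
    rw [hp, div_lt_one hn0]
    have : (2:ℝ) ≤ n := by exact_mod_cast hn
    nlinarith
  set K : ℝ := (2:ℝ) ^ (-((n:ℝ)+2*s)) * ((2:ℝ)^n - 1) * κ * (κ/2) ^ p with hK
  have hKpos : 0 < K := by
    have h2n : (1:ℝ) < (2:ℝ)^n := one_lt_pow₀ (by norm_num) (by omega)
    have h2q : (0:ℝ) < (2:ℝ) ^ (-((n:ℝ)+2*s)) := Real.rpow_pos_of_pos (by norm_num) _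
    rw [hK]
    exact mul_pos (mul_pos (mul_pos h2q (by linarith)) hκ) (Real.rpow_pos_of_pos (by positivity) _)
  set c : ℝ := min (1/2) (K ^ ((1-p)⁻¹)) with hc
  have hc0 : 0 < c := lt_min (by norm_num) (Real.rpow_pos_of_pos hKpos _)
  have hc2 : c ≤ 1/2 := min_le_left _ _
  have hc1 : c < 1 := lt_of_le_of_lt hc2 (by norm_num)
  have hcK : c ^ (1-p) ≤ K := by
    calc c ^ (1-p) ≤ (K ^ ((1-p)⁻¹)) ^ (1-p) :=
          Real.rpow_le_rpow hc0.le (min_le_right _ _) (by linarith)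
      _ = K := by
          rw [← Real.rpow_mul hKpos.le, inv_mul_cancel₀ (by linarith : (1:ℝ)-p ≠ 0),
            Real.rpow_one]
  refine ⟨c, ⟨hc0, hc1⟩, ?_⟩
  intro A B hA hB hAB hA0 hAfin hcB hBfin
  set a : ℝ := (volume A).toReal with hadef
  set b : ℝ := (volume B).toReal with hbdef
  have ha : 0 < a := ENNReal.toReal_pos hA0.ne' hAfin.ne
  have hB0 : 0 < volume B := by
    refine lt_trans ?_ hcB
    exact ENNReal.mul_pos (ENNReal.ofReal_pos.mpr hc0).ne' hA0.ne'
  have hb : 0 < b := ENNReal.toReal_pos hB0.ne' hBfin.ne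
  have hab : c * a < b := by
    have h1 : (ENNReal.ofReal c * volume A).toReal < (volume B).toReal :=
      ENNReal.toReal_strict_mono hBfin.ne hcB
    rwa [ENNReal.toReal_mul, ENNReal.toReal_ofReal hc0.le] at h1
  set m : ℝ≥0∞ := volume (A ∪ B) with hmdef
  have hmfin : m < ⊤ := (measure_union_le A B).trans_lt (ENNReal.add_lt_top.mpr ⟨hAfin, hBfin⟩)
  have hm0' : 0 < m := hA0.trans_le (measure_mono Set.subset_union_left)
  set mR : ℝ := m.toReal with hmRdef
  have hmR0 : 0 < mR := ENNReal.toReal_pos hm0'.ne' hmfin.ne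
  have hmab : mR ≤ a + b := by
    calc mR ≤ (volume A + volume B).toReal :=
          ENNReal.toReal_mono (by finiteness) (measure_union_le A B)
      _ = a + b := ENNReal.toReal_add hAfin.ne hBfin.ne
  set r : ℝ := (mR/κ) ^ ((n:ℝ)⁻¹) with hrdef
  have hr0 : 0 < r := by rw [hrdef]; positivity
  have hrn : r ^ (n:ℝ) = mR/κ := by
    rw [hrdef, ← Real.rpow_mul (by positivity), inv_mul_cancel₀ hn0.ne', Real.rpow_one]
  have hrnn : r ^ n = mR/κ := by rw [← Real.rpow_natCast r n, hrn]
  have hball : ∀ (x : Spc n) (t : ℝ), 0 ≤ t →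
      volume (Metric.ball x t) = ENNReal.ofReal (t^n * κ) := by
    intro x t ht
    rw [EuclideanSpace.volume_ball, Fintype.card_fin, ← ENNReal.ofReal_pow ht,
      ← ENNReal.ofReal_mul (by positivity)]
  have hmball : ∀ x : Spc n, m = volume (Metric.ball x r) := by
    intro x
    rw [hball x r hr0.le, hrnn, div_mul_cancel₀ _ hκ.ne', hmRdef,
      ENNReal.ofReal_toReal hmfin.ne]
  have hq0 : -((n:ℝ) + 2*s) ≤ 0 := neg_nonpos.mpr (by positivity)
  set D : Set (Spc n) := (A ∪ B)ᶜ with hD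
  have hDm : MeasurableSet D := (hA.union hB).compl
  have hXnn : 0 ≤ (2*r)^n * κ - r^n * κ := by
    have h1 : r^n ≤ (2*r)^n := pow_le_pow_left₀ hr0.le (by linarith) n
    nlinarith
  have hLB : ∀ x ∈ A,
      ENNReal.ofReal ((2*r) ^ (-((n:ℝ) + 2*s)) * ((2*r)^n * κ - r^n * κ)) ≤
        ∫⁻ y in D, ENNReal.ofReal (‖x - y‖ ^ (-((n:ℝ) + 2*s))) := by
    intro x hx
    have hSm : MeasurableSet (D ∩ Metric.ball x (2*r)) := hDm.inter measurableSet_ball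
    have hsub : Metric.ball x (2*r) ⊆ (D ∩ Metric.ball x (2*r)) ∪ (A ∪ B) := by
      intro y hy
      by_cases hyAB : y ∈ A ∪ B
      · exact Or.inr hyAB
      · exact Or.inl ⟨hyAB, hy⟩
    have hvolS : ENNReal.ofReal ((2*r)^n * κ - r^n * κ) ≤
        volume (D ∩ Metric.ball x (2*r)) := by
      have h1 : volume (Metric.ball x (2*r)) ≤ volume (D ∩ Metric.ball x (2*r)) + m :=
        (measure_mono hsub).trans (measure_union_le _ _)
      have h2 : ENNReal.ofReal ((2*r)^n * κ - r^n * κ) =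
          volume (Metric.ball x (2*r)) - m := by
        rw [hball x (2*r) (by positivity), hmball x, hball x r hr0.le,
          ENNReal.ofReal_sub _ (by positivity)]
      rw [h2]
      exact tsub_le_iff_right.mpr h1
    have hpt : ∀ y ∈ D ∩ Metric.ball x (2*r),
        ENNReal.ofReal ((2*r) ^ (-((n:ℝ) + 2*s))) ≤
          ENNReal.ofReal (‖x - y‖ ^ (-((n:ℝ) + 2*s))) := by
      intro y hy
      have hyD : y ∉ A ∪ B := hy.1
      have hxy : x ≠ y := by rintro rfl; exact hyD (Or.inl hx)
      have h0 : 0 < ‖x - y‖ := by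
        rw [norm_sub_pos_iff]
        exact hxy
      have hlt : ‖x - y‖ ≤ 2*r := by
        have h := hy.2
        rw [Metric.mem_ball] at h
        rw [← dist_eq_norm, dist_comm]
        exact h.le
      exact ENNReal.ofReal_le_ofReal (Real.rpow_le_rpow_of_nonpos h0 hlt hq0)
    calc ENNReal.ofReal ((2*r) ^ (-((n:ℝ) + 2*s)) * ((2*r)^n * κ - r^n * κ))
        = ENNReal.ofReal ((2*r) ^ (-((n:ℝ) + 2*s))) *
            ENNReal.ofReal ((2*r)^n * κ - r^n * κ) := ENNReal.ofReal_mul (by positivity)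
      _ ≤ ENNReal.ofReal ((2*r) ^ (-((n:ℝ) + 2*s))) *
            volume (D ∩ Metric.ball x (2*r)) := mul_le_mul_right hvolS _
      _ = ∫⁻ _ in D ∩ Metric.ball x (2*r),
            ENNReal.ofReal ((2*r) ^ (-((n:ℝ) + 2*s))) := (setLIntegral_const _ _).symm
      _ ≤ ∫⁻ y in D ∩ Metric.ball x (2*r),
            ENNReal.ofReal (‖x - y‖ ^ (-((n:ℝ) + 2*s))) := setLIntegral_mono' hSm hpt
      _ ≤ ∫⁻ y in D, ENNReal.ofReal (‖x - y‖ ^ (-((n:ℝ) + 2*s))) :=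
            lintegral_mono_set Set.inter_subset_left
  have hmain : ENNReal.ofReal ((2*r) ^ (-((n:ℝ) + 2*s)) * ((2*r)^n * κ - r^n * κ) * a) ≤
      Ldb n s A (A ∪ B)ᶜ := by
    have e : Ldb n s A (A ∪ B)ᶜ =
        ∫⁻ x in A, ∫⁻ y in D, ENNReal.ofReal (‖x - y‖ ^ (-((n:ℝ) + 2*s))) := rfl
    rw [e]
    calc ENNReal.ofReal ((2*r) ^ (-((n:ℝ) + 2*s)) * ((2*r)^n * κ - r^n * κ) * a)
        = ENNReal.ofReal ((2*r) ^ (-((n:ℝ) + 2*s)) * ((2*r)^n * κ - r^n * κ)) *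
            ENNReal.ofReal a := ENNReal.ofReal_mul (by positivity)
      _ = ENNReal.ofReal ((2*r) ^ (-((n:ℝ) + 2*s)) * ((2*r)^n * κ - r^n * κ)) *
            volume A := by rw [hadef, ENNReal.ofReal_toReal hAfin.ne]
      _ = ∫⁻ _ in A, ENNReal.ofReal ((2*r) ^ (-((n:ℝ) + 2*s)) * ((2*r)^n * κ - r^n * κ)) :=
            (setLIntegral_const _ _).symm
      _ ≤ ∫⁻ x in A, ∫⁻ y in D, ENNReal.ofReal (‖x - y‖ ^ (-((n:ℝ) + 2*s))) :=
            setLIntegral_mono' hA hLB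
  refine le_trans (ENNReal.ofReal_le_ofReal ?_) hmain
  exact aux_real n hn s hs0 hs1 κ hκ c hc0 hc2 hcK a b mR r ha hb hab hmab hmR0 hrdef
end
end

section
/- Projection estimate: let n ≥ 2 and let Ω ⊆ ℝ^n be a Lebesgue measurable set. For each i ∈ {1,…,n}, let Π_i(Ω) ⊆ ℝ^{n−1} denote the orthogonal projection of Ω onto the coordinate hyperplane {x_i = 0}, i.e., the image of Ω under the map deleting the i-th coordinate. Then |Ω|^{n−1} ≤ ∏_{i=1}^{n} λ*(Π_i(Ω)), where |·| is n-dimensional Lebesgue measure and λ* is (n−1)-dimensional Lebesgue outer measure. -/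
open MeasureTheory
open scoped ENNReal

open Finset Function in
/-- Auxiliary induction for the Loomis–Whitney inequality, in the `lmarginal` framework.
If each `g i` is independent of the `i`-th coordinate, then the marginal (over `s`) of
`∏ i, (g i) ^ p` is bounded by the product of the marginals of the `g i` over `s.erase i`. -/
lemma loomis_whitney_marginal {ι : Type*} [Fintype ι] [DecidableEq ι]
    {A : ι → Type*} [∀ i, MeasurableSpace (A i)] (μ : ∀ i, Measure (A i))
    [∀ i, SigmaFinite (μ i)] {p : ℝ} (hp₀ : 0 ≤ p)
    (hp : ((Fintype.card ι - 1 : ℕ) : ℝ) * p = 1) (s : Finset ι) :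
    ∀ g : ι → (∀ i, A i) → ℝ≥0∞, (∀ i, Measurable (g i)) →
      (∀ i x t, g i (Function.update x i t) = g i x) →
      ∀ x, (∫⋯∫⁻_s, (fun y => ∏ i, g i y ^ p) ∂μ) x
        ≤ ∏ i, ((∫⋯∫⁻_(s.erase i), g i ∂μ) x) ^ p := by
  induction s using Finset.induction with
  | empty => intro g hg hind x; simp
  | @insert j s hj ih =>
    intro g hg hind x
    have hmeas : Measurable fun y => ∏ i, g i y ^ p :=
      Finset.measurable_prod _ fun i _ => (hg i).pow_const p
    rw [lmarginal_insert' _ hmeas hj]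
    -- the updated family after integrating out the `j`-th coordinate
    set h : ι → (∀ i, A i) → ℝ≥0∞ :=
      fun i => if i = j then g j else ∫⋯∫⁻_{j}, g i ∂μ with hh
    have hhmeas : ∀ i, Measurable (h i) := by
      intro i
      by_cases hij : i = j
      · simpa only [hh, if_pos hij] using hij ▸ hg j
      · simpa only [hh, if_neg hij] using (hg i).lmarginal μ
    have hhind : ∀ i x t, h i (Function.update x i t) = h i x := by
      intro i x t
      by_cases hij : i = j
      · subst hij; simpa only [hh, if_pos rfl] using hind i x t
      · simp only [hh, if_neg hij]
        rw [lmarginal_update_of_notMem (hg i) (by simp [hij]) x t]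
        have : (g i ∘ fun y => Function.update y i t) = g i := funext fun y => hind i y t
        rw [this]
    -- pointwise Hölder bound of the inner integral
    have key : ∀ z, (∫⁻ t, (fun y => ∏ i, g i y ^ p) (Function.update z j t) ∂μ j)
        ≤ ∏ i, h i z ^ p := by
      intro z
      have hsum : ∑ _i ∈ (univ : Finset ι).erase j, p = 1 := by
        rw [Finset.sum_const, nsmul_eq_mul, Finset.card_erase_of_mem (mem_univ j),
          Finset.card_univ]
        exact hp
      calc ∫⁻ t, ∏ i, g i (Function.update z j t) ^ p ∂μ j
          = ∫⁻ t, g j z ^ p *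
              ∏ i ∈ (univ : Finset ι).erase j, g i (Function.update z j t) ^ p ∂μ j := by
            congr 1 with t
            rw [← Finset.mul_prod_erase univ _ (mem_univ j), hind j z t]
        _ = g j z ^ p *
              ∫⁻ t, ∏ i ∈ (univ : Finset ι).erase j, g i (Function.update z j t) ^ p ∂μ j := by
            rw [lintegral_const_mul]
            exact Finset.measurable_prod _ fun i _ =>
              ((hg i).comp (measurable_update z)).pow_const p
        _ ≤ g j z ^ p *
              ∏ i ∈ (univ : Finset ι).erase j,
                (∫⁻ t, g i (Function.update z j t) ∂μ j) ^ p := by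
            gcongr
            exact ENNReal.lintegral_prod_norm_pow_le _
              (fun i _ => ((hg i).comp (measurable_update z)).aemeasurable)
              hsum (fun i _ => hp₀)
        _ = ∏ i, h i z ^ p := by
            rw [← Finset.mul_prod_erase univ (fun i => h i z ^ p) (mem_univ j)]
            congr 1
            · simp only [hh, if_pos rfl]
            · refine Finset.prod_congr rfl fun i hi => ?_
              have hij : i ≠ j := (Finset.mem_erase.mp hi).1
              simp only [hh, if_neg hij, lmarginal_singleton]
    calc (∫⋯∫⁻_s, (fun z => ∫⁻ t, (fun y => ∏ i, g i y ^ p) (Function.update z j t) ∂μ j) ∂μ) x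
        ≤ (∫⋯∫⁻_s, (fun z => ∏ i, h i z ^ p) ∂μ) x := lmarginal_mono (fun z => key z) x
      _ ≤ ∏ i, ((∫⋯∫⁻_(s.erase i), h i ∂μ) x) ^ p := ih h hhmeas hhind x
      _ = ∏ i, ((∫⋯∫⁻_((insert j s).erase i), g i ∂μ) x) ^ p := by
          refine Finset.prod_congr rfl fun i _ => ?_
          by_cases hij : i = j
          · subst hij
            simp only [hh, if_pos rfl, Finset.erase_insert hj,
              Finset.erase_eq_of_notMem hj]
          · simp only [hh, if_neg hij]
            rw [← lmarginal_union μ (g i) (hg i)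
              (Finset.disjoint_singleton_right.mpr (by simp [hj, Ne.symm hij]))]
            congr 2
            rw [Finset.erase_insert_of_ne (Ne.symm hij), Finset.insert_eq, Finset.union_comm]

open Finset Function in
/-- projection estimate. For a measurable `Ω ⊆ ℝ^n`,
`|Ω|^{n-1} ≤ ∏_i λ*(Π_i(Ω))`, where `Π_i` deletes the `i`-th coordinate and the
(n-1)-dimensional Lebesgue outer measure of the (possibly nonmeasurable) projection
is given by evaluating the measure `volume` on it. -/
theorem projection_estimate (n : ℕ) (hn : 2 ≤ n) (Ω : Set (Fin n → ℝ))
    (hΩ : MeasurableSet Ω) :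
    volume Ω ^ (n - 1) ≤
      ∏ i : Fin n,
        volume ((fun (x : Fin n → ℝ) (j : {j : Fin n // j ≠ i}) => x j) '' Ω) := by
  classical
  set proj : (i : Fin n) → (Fin n → ℝ) → ({j : Fin n // j ≠ i} → ℝ) :=
    fun i x j => x j with hproj
  set S : (i : Fin n) → Set ({j : Fin n // j ≠ i} → ℝ) :=
    fun i => toMeasurable volume (proj i '' Ω) with hS
  have hprojm : ∀ i, Measurable (proj i) :=
    fun i => measurable_pi_lambda _ fun j => measurable_pi_apply _
  set g : (i : Fin n) → (Fin n → ℝ) → ℝ≥0∞ :=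
    fun i => (proj i ⁻¹' S i).indicator 1 with hg
  have hgm : ∀ i, Measurable (g i) := fun i =>
    measurable_const.indicator ((hprojm i) (measurableSet_toMeasurable _ _))
  have hgind : ∀ i x t, g i (Function.update x i t) = g i x := by
    intro i x t
    have : proj i (Function.update x i t) = proj i x := by
      funext j
      exact Function.update_of_ne j.prop t x
    simp only [hg, Set.indicator, Set.mem_preimage, this, Pi.one_apply]
  set p : ℝ := ((n : ℝ) - 1)⁻¹ with hpdef
  have hn1 : (1 : ℝ) ≤ (n : ℝ) - 1 := by
    have : (2 : ℝ) ≤ (n : ℝ) := by exact_mod_cast hn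
    linarith
  have hp₀ : 0 ≤ p := by positivity
  have hcast : ((Fintype.card (Fin n) - 1 : ℕ) : ℝ) = (n : ℝ) - 1 := by
    rw [Fintype.card_fin]
    have h1n : 1 ≤ n := le_trans one_le_two hn
    push_cast [Nat.cast_sub h1n]
    ring
  have hp : ((Fintype.card (Fin n) - 1 : ℕ) : ℝ) * p = 1 := by
    rw [hcast, hpdef, mul_inv_cancel₀ (by linarith)]
  -- apply the key lemma at the point 0
  have key := loomis_whitney_marginal (fun _ : Fin n => (volume : Measure ℝ)) hp₀ hp
    Finset.univ g hgm hgind (fun _ => 0)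
  rw [lmarginal_univ] at key
  -- LHS of key bounds `volume Ω`
  have hΩle : volume Ω ≤ ∫⁻ x, ∏ i, g i x ^ p ∂Measure.pi (fun _ => (volume : Measure ℝ)) := by
    have hvol : (volume : Measure (Fin n → ℝ)) = Measure.pi fun _ => volume := volume_pi
    rw [← hvol, ← lintegral_indicator_one hΩ]
    refine lintegral_mono fun x => ?_
    by_cases hx : x ∈ Ω
    · have h1 : ∀ i, g i x = 1 := by
        intro i
        have : proj i x ∈ S i := subset_toMeasurable _ _ ⟨x, hx, rfl⟩
        simp [hg, Set.indicator, this]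
      simp [Set.indicator, hx, h1]
    · simp [Set.indicator, hx]
  -- compute the marginals on the RHS
  have hmarg : ∀ i : Fin n,
      (∫⋯∫⁻_(Finset.univ.erase i), g i ∂fun _ => (volume : Measure ℝ)) (fun _ => 0)
        = volume (S i) := by
    intro i
    set e : ((Finset.univ.erase i : Finset (Fin n)) : Type) ≃ {j : Fin n // j ≠ i} :=
      Equiv.subtypeEquivRight (fun j => by simp [Finset.mem_erase]) with he
    set T : (((Finset.univ.erase i : Finset (Fin n)) : Type) → ℝ) ≃ᵐ ({j : Fin n // j ≠ i} → ℝ) :=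
      MeasurableEquiv.arrowCongr' e (MeasurableEquiv.refl ℝ) with hT
    have hTmp : MeasurePreserving T volume volume :=
      volume_preserving_arrowCongr' e (MeasurableEquiv.refl ℝ) (MeasurePreserving.id _)
    have heq : ∀ y : ((Finset.univ.erase i : Finset (Fin n)) : Type) → ℝ,
        proj i (Function.updateFinset (fun _ => 0) (Finset.univ.erase i) y) = T y := by
      intro y
      funext j
      have hjmem : (j : Fin n) ∈ Finset.univ.erase i := by simp [Finset.mem_erase, j.prop]
      simp only [hproj, Function.updateFinset, hjmem, dif_pos]
      rfl
    calc (∫⋯∫⁻_(Finset.univ.erase i), g i ∂fun _ => (volume : Measure ℝ)) (fun _ => 0)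
        = ∫⁻ y, (S i).indicator 1 (T y) ∂Measure.pi (fun _ => (volume : Measure ℝ)) := by
          rw [lmarginal]
          congr 1 with y
          simp only [hg, Set.indicator, Set.mem_preimage, heq y, Pi.one_apply]
      _ = ∫⁻ z, (S i).indicator 1 z ∂(volume : Measure ({j : Fin n // j ≠ i} → ℝ)) := by
          rw [← volume_pi]
          exact hTmp.lintegral_comp (measurable_const.indicator (measurableSet_toMeasurable _ _))
      _ = volume (S i) := lintegral_indicator_one (measurableSet_toMeasurable _ _)
  have hvolS : ∀ i, volume (S i) = volume (proj i '' Ω) := fun i => measure_toMeasurable _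
  -- put everything together
  have main : volume Ω ≤ ∏ i : Fin n, volume (proj i '' Ω) ^ p := by
    refine le_trans hΩle (le_trans key ?_)
    refine le_of_eq (Finset.prod_congr rfl fun i _ => ?_)
    rw [hmarg i, hvolS i]
  have hfinal : volume Ω ^ (n - 1)
      ≤ (∏ i : Fin n, volume (proj i '' Ω) ^ p) ^ ((n - 1 : ℕ) : ℝ) := by
    rw [← ENNReal.rpow_natCast (volume Ω) (n - 1)]
    exact ENNReal.rpow_le_rpow main (by positivity)
  refine le_trans hfinal (le_of_eq ?_)
  rw [← ENNReal.prod_rpow_of_nonneg (by positivity : (0:ℝ) ≤ ((n - 1 : ℕ) : ℝ))]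
  refine Finset.prod_congr rfl fun i _ => ?_
  show (volume (proj i '' Ω) ^ p) ^ ((n - 1 : ℕ) : ℝ) = volume (proj i '' Ω)
  rw [← ENNReal.rpow_mul]
  have h1n : 1 ≤ n := le_trans one_le_two hn
  have hmul : p * ((n - 1 : ℕ) : ℝ) = 1 := by
    rw [hpdef, Nat.cast_sub h1n]
    push_cast
    field_simp
  rw [hmul, ENNReal.rpow_one]
end

section
/- Localized estimate for s ∈ (1/2,1): let n ≥ 2, s ∈ (1/2,1) and σ > 0. There exists δ > 0, depending only on n, s and σ, such that for every cube Q ⊂ ℝ^n and all disjoint measurable sets A, D ⊆ Q with min{|A|, |D|} ≥ σ|Q|, setting B := Q ∖ (A ∪ D), one has L(A,D) ≥ δ |Q|^{(n−2s)/n} (|Q|/|B|)^{2s−1}, where the right-hand side is interpreted as +∞ when |B| = 0. -/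
open MeasureTheory ENNReal Filter Topology

noncomputable section

/-- An axis-parallel cube in `ℝ^n` with lower corner `a` and side length `h`. -/
def Cube (n : ℕ) (a : Spc n) (h : ℝ) : Set (Spc n) :=
  {x : Spc n | ∀ i : Fin n, x i ∈ Set.Icc (a i) (a i + h)}


open MeasureTheory ENNReal


open Finset

section Comb

lemma first_change (P : ℕ → Prop) {s t : ℕ} (hst : s ≤ t) (hs : P s) (ht : ¬ P t) :
    ∃ j, s ≤ j ∧ j < t ∧ P j ∧ ¬ P (j + 1) := by
  by_contra hcon
  push_neg at hcon
  apply ht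
  have key : ∀ j, s ≤ j → j ≤ t → P j := by
    intro j
    induction j with
    | zero => intro h1 _; have : s = 0 := Nat.le_zero.mp h1; rwa [← this]
    | succ k ih =>
      intro h1 h2
      rcases Nat.lt_or_ge s (k + 1) with hlt | hge
      · have hsk : s ≤ k := Nat.lt_succ_iff.mp hlt
        have hkt : k < t := h2
        exact hcon k hsk hkt (ih hsk hkt.le)
      · have : s = k + 1 := le_antisymm h1 hge
        rwa [← this]
  exact key t hst le_rfl

lemma transition (P : ℕ → Prop) {s t : ℕ} (hs : P s) (ht : ¬ P t) :
    ∃ j j', P j ∧ ¬ P j' ∧ (j' = j + 1 ∨ j = j' + 1) ∧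
      j ≤ max s t ∧ j' ≤ max s t := by
  rcases le_total s t with hst | hts
  · obtain ⟨j, h1, h2, h3, h4⟩ := first_change P hst hs ht
    exact ⟨j, j + 1, h3, h4, Or.inl rfl, by omega, by omega⟩
  · obtain ⟨j, h1, h2, h3, h4⟩ := first_change (fun u => P (s + t - u)) hts
      (by simpa using hs) (by simpa [Nat.add_sub_cancel_left] using ht)
    refine ⟨s + t - j, s + t - (j + 1), h3, h4, Or.inr (by omega), by omega, by omega⟩

variable {n M : ℕ}

/-- grid adjacency in direction `k`. -/
def GAdj (k : Fin n) (q q' : Fin n → Fin M) : Prop :=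
  (∀ i, i ≠ k → q i = q' i) ∧ ((q' k : ℕ) = q k + 1 ∨ (q k : ℕ) = q' k + 1)

lemma path_transition (c : (Fin n → Fin M) → Fin 3) (a d : Fin n → Fin M)
    (ha : c a = 0) (hd : c d ≠ 0) :
    ∃ (k : Fin n) (q q' : Fin n → Fin M), GAdj k q q' ∧ c q = 0 ∧ c q' ≠ 0 ∧
      (∀ i : Fin n, (i : ℕ) < (k : ℕ) → q i = d i) ∧
      (∀ i : Fin n, (k : ℕ) < (i : ℕ) → q i = a i) := by
  classical
  set p : ℕ → (Fin n → Fin M) := fun j i => if (i : ℕ) < j then d i else a i with hp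
  have hp0 : p 0 = a := by funext i; simp [hp]
  have hpn : p n = d := by funext i; simp [hp, i.isLt]
  obtain ⟨j, hj0, hjn, hPj, hPj1⟩ := first_change (fun j => c (p j) = 0) (Nat.zero_le n)
    (by show c (p 0) = 0; rwa [hp0]) (by show ¬ (c (p n) = 0); rwa [hpn])
  set k : Fin n := ⟨j, hjn⟩ with hk
  set base : Fin n → Fin M := p j with hbase
  have hbk : base k = a k := by simp [hbase, hp, hk]
  have hsucc : p (j + 1) = Function.update base k (d k) := by
    funext i
    rcases eq_or_ne i k with rfl | hik
    · simp [hbase, hp, hk, Function.update_self]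
    · have hij : (i : ℕ) ≠ j := by
        intro hcontra; exact hik (Fin.ext (by simp [hk, hcontra]))
      rw [Function.update_of_ne hik]
      simp only [hbase, hp]
      by_cases hij' : (i : ℕ) < j
      · rw [if_pos (by omega), if_pos hij']
      · rw [if_neg (by omega), if_neg hij']
  set P' : ℕ → Prop := fun u => ∀ hu : u < M, c (Function.update base k ⟨u, hu⟩) = 0 with hP'
  have hP's : P' ((a k : ℕ)) := by
    intro hu
    have : (⟨(a k : ℕ), hu⟩ : Fin M) = a k := Fin.ext rfl
    rw [this, ← hbk, Function.update_eq_self]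
    exact hPj
  have hP't : ¬ P' ((d k : ℕ)) := by
    intro hcontra
    have := hcontra (d k).isLt
    have heq : (⟨(d k : ℕ), (d k).isLt⟩ : Fin M) = d k := Fin.ext rfl
    rw [heq, ← hsucc] at this
    exact hPj1 this
  obtain ⟨u, u', hu, hu', hadj, hub, hu'b⟩ := transition P' hP's hP't
  have huM : u < M := lt_of_le_of_lt hub (by
    rcases max_cases ((a k : ℕ)) ((d k : ℕ)) with ⟨h, _⟩ | ⟨h, _⟩ <;> rw [h]
    exacts [(a k).isLt, (d k).isLt])
  have hu'M : u' < M := lt_of_le_of_lt hu'b (by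
    rcases max_cases ((a k : ℕ)) ((d k : ℕ)) with ⟨h, _⟩ | ⟨h, _⟩ <;> rw [h]
    exacts [(a k).isLt, (d k).isLt])
  refine ⟨k, Function.update base k ⟨u, huM⟩, Function.update base k ⟨u', hu'M⟩, ?_, hu huM, ?_, ?_, ?_⟩
  · constructor
    · intro i hik; simp [Function.update_of_ne hik]
    · simp only [Function.update_self]
      rcases hadj with h | h
      · left; simpa using h
      · right; simpa using h
  · intro hcontra
    exact hu' (fun hv => by
      have : (⟨u', hv⟩ : Fin M) = ⟨u', hu'M⟩ := rfl
      rw [this]; exact hcontra)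
  · intro i hik
    have hik' : i ≠ k := fun hcontra => by rw [hcontra] at hik; omega
    rw [Function.update_of_ne hik']
    simp only [hbase, hp]
    rw [if_pos (by simpa [hk] using hik)]
  · intro i hik
    have hik' : i ≠ k := fun hcontra => by rw [hcontra] at hik; omega
    rw [Function.update_of_ne hik']
    simp only [hbase, hp]
    have : (k : ℕ) = j := rfl
    rw [if_neg (by omega)]

end Comb

lemma gadj_right_determined {n M : ℕ} {k : Fin n} {q q1 q2 : Fin n → Fin M}
    (h1 : GAdj k q q1) (h2 : GAdj k q q2)
    (hb : ((q1 k : ℕ) = (q k : ℕ) + 1) ↔ ((q2 k : ℕ) = (q k : ℕ) + 1)) : q1 = q2 := by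
  funext i
  by_cases hik : i = k
  · subst hik
    rcases h1.2 with hc1 | hc1 <;> rcases h2.2 with hc2 | hc2 <;> apply Fin.ext <;> omega
  · rw [← h1.1 i hik, ← h2.1 i hik]

lemma gadj_left_determined {n M : ℕ} {k : Fin n} {q' q1 q2 : Fin n → Fin M}
    (h1 : GAdj k q1 q') (h2 : GAdj k q2 q')
    (hb : ((q' k : ℕ) = (q1 k : ℕ) + 1) ↔ ((q' k : ℕ) = (q2 k : ℕ) + 1)) : q1 = q2 := by
  funext i
  by_cases hik : i = k
  · subst hik
    rcases h1.2 with hc1 | hc1 <;> rcases h2.2 with hc2 | hc2 <;> apply Fin.ext <;> omega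
  · rw [h1.1 i hik, h2.1 i hik]

lemma comb_main {n M : ℕ} (hn : 0 < n) (hM : 0 < M) (c : (Fin n → Fin M) → Fin 3) :
    ∃ (k : Fin n) (S : Finset (Fin n → Fin M)) (w : (Fin n → Fin M) → (Fin n → Fin M)),
      (∀ v ∈ S, c v = 0 ∧ c (w v) = 1 ∧
        ∀ i, (v i : ℕ) ≤ (w v i : ℕ) + 1 ∧ (w v i : ℕ) ≤ (v i : ℕ) + 1) ∧
      ((Finset.univ.filter fun v => c v = 0).card *
        (Finset.univ.filter fun v => c v = 1).card ≤
        2 * n * M ^ (n + 1) * (S.card + (Finset.univ.filter fun v => c v = 2).card)) := by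
  classical
  set k0 : Fin n := ⟨0, hn⟩
  set T0 : Finset (Fin n × (Fin n → Fin M) × (Fin n → Fin M)) :=
    Finset.univ.filter (fun t => GAdj t.1 t.2.1 t.2.2 ∧ c t.2.1 = 0 ∧ c t.2.2 ≠ 0) with hT0
  set AxD := (Finset.univ.filter fun v => c v = 0) ×ˢ (Finset.univ.filter fun v => c v = 1)
    with hAxD
  have hex : ∀ ad : (Fin n → Fin M) × (Fin n → Fin M), c ad.1 = 0 → c ad.2 = 1 →
      ∃ x : Fin n × (Fin n → Fin M) × (Fin n → Fin M),
        (GAdj x.1 x.2.1 x.2.2 ∧ c x.2.1 = 0 ∧ c x.2.2 ≠ 0) ∧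
        (∀ i : Fin n, (i : ℕ) < (x.1 : ℕ) → x.2.1 i = ad.2 i) ∧
        (∀ i : Fin n, (x.1 : ℕ) < (i : ℕ) → x.2.1 i = ad.1 i) := by
    intro ad h1 h2
    obtain ⟨k, q, q', hadj, hq, hq', hlt, hgt⟩ :=
      path_transition c ad.1 ad.2 h1 (by rw [h2]; decide)
    exact ⟨(k, q, q'), ⟨hadj, hq, hq'⟩, hlt, hgt⟩
  set f : (Fin n → Fin M) × (Fin n → Fin M) → Fin n × (Fin n → Fin M) × (Fin n → Fin M) :=
    fun ad => if h : c ad.1 = 0 ∧ c ad.2 = 1 then (hex ad h.1 h.2).choose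
      else (k0, ad.1, ad.1) with hf
  set Φ : (Fin n → Fin M) × (Fin n → Fin M) →
      (Fin n × (Fin n → Fin M) × (Fin n → Fin M)) × ((Fin n → Fin M) × Fin M) := fun ad =>
    (f ad, (fun i => if (i : ℕ) ≤ ((f ad).1 : ℕ) then ad.1 i else ad.2 i, ad.2 (f ad).1)) with hΦ
  have hmem : ∀ ad ∈ AxD, c ad.1 = 0 ∧ c ad.2 = 1 := by
    intro ad had
    rw [hAxD, Finset.mem_product] at had
    exact ⟨(Finset.mem_filter.mp had.1).2, (Finset.mem_filter.mp had.2).2⟩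
  have hrecov : ∀ ad ∈ AxD,
      ((fun i : Fin n => if (i : ℕ) ≤ ((Φ ad).1.1 : ℕ) then (Φ ad).2.1 i else (Φ ad).1.2.1 i)
        = ad.1) ∧
      ((fun i : Fin n => if (i : ℕ) < ((Φ ad).1.1 : ℕ) then (Φ ad).1.2.1 i
          else if (i : ℕ) = ((Φ ad).1.1 : ℕ) then (Φ ad).2.2 else (Φ ad).2.1 i) = ad.2) := by
    intro ad had
    have h := hmem ad had
    have hfad : f ad = (hex ad h.1 h.2).choose := dif_pos h
    obtain ⟨-, hlt, hgt⟩ := (hex ad h.1 h.2).choose_spec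
    rw [← hfad] at hlt hgt
    constructor
    · funext i
      simp only [hΦ]
      by_cases hik : (i : ℕ) ≤ ((f ad).1 : ℕ)
      · rw [if_pos hik, if_pos hik]
      · rw [if_neg hik, hgt i (by omega)]
    · funext i
      simp only [hΦ]
      by_cases hik : (i : ℕ) < ((f ad).1 : ℕ)
      · rw [if_pos hik, hlt i hik]
      · rw [if_neg hik]
        by_cases hik2 : (i : ℕ) = ((f ad).1 : ℕ)
        · rw [if_pos hik2]
          have : i = (f ad).1 := Fin.ext hik2
          rw [this]
        · rw [if_neg hik2, if_neg (by omega)]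
  have hinj : Set.InjOn Φ ↑AxD := by
    intro ad had bd hbd heq
    have h1 := hrecov ad had
    have h2 := hrecov bd hbd
    rw [heq] at h1
    ext1
    · rw [← h1.1, ← h2.1]
    · rw [← h1.2, ← h2.2]
  have hmaps : ∀ ad ∈ AxD, Φ ad ∈ T0 ×ˢ (Finset.univ : Finset ((Fin n → Fin M) × Fin M)) := by
    intro ad had
    have h := hmem ad had
    have hfad : f ad = (hex ad h.1 h.2).choose := dif_pos h
    obtain ⟨hprop, -, -⟩ := (hex ad h.1 h.2).choose_spec
    rw [← hfad] at hprop
    rw [Finset.mem_product]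
    exact ⟨Finset.mem_filter.mpr ⟨Finset.mem_univ _, hprop⟩, Finset.mem_univ _⟩
  have hcardA : AxD.card ≤ T0.card * M ^ (n + 1) := by
    have h1 := Finset.card_le_card_of_injOn Φ hmaps hinj
    have h2 : (T0 ×ˢ (Finset.univ : Finset ((Fin n → Fin M) × Fin M))).card
        = T0.card * M ^ (n + 1) := by
      rw [Finset.card_product, Finset.card_univ, Fintype.card_prod, Fintype.card_fun,
        Fintype.card_fin, Fintype.card_fin, ← pow_succ]
    rw [h2] at h1
    exact h1
  set TD := T0.filter (fun t => c t.2.2 = 1) with hTD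
  set TX := T0.filter (fun t => c t.2.2 = 2) with hTX
  have hsplit : T0.card ≤ TD.card + TX.card := by
    have hsub : T0 ⊆ TD ∪ TX := by
      intro t ht
      have ht' := Finset.mem_filter.mp ht
      have lem : ∀ x : Fin 3, x ≠ 0 → x = 1 ∨ x = 2 := by decide
      have : c t.2.2 = 1 ∨ c t.2.2 = 2 := lem _ ht'.2.2.2
      rcases this with h | h
      · exact Finset.mem_union_left _ (Finset.mem_filter.mpr ⟨ht, h⟩)
      · exact Finset.mem_union_right _ (Finset.mem_filter.mpr ⟨ht, h⟩)
    exact le_trans (Finset.card_le_card hsub) (Finset.card_union_le _ _)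
  have hTXcard : TX.card ≤ (Finset.univ.filter fun v => c v = 2).card * (n * 2) := by
    have hmaps2 : ∀ t ∈ TX, (t.2.2, t.1, decide ((t.2.2 t.1 : ℕ) = (t.2.1 t.1 : ℕ) + 1)) ∈
        ((Finset.univ.filter fun v => c v = 2) ×ˢ
          (Finset.univ : Finset (Fin n × Bool))) := by
      intro t ht
      rw [Finset.mem_product]
      exact ⟨Finset.mem_filter.mpr ⟨Finset.mem_univ _, (Finset.mem_filter.mp ht).2⟩,
        Finset.mem_univ _⟩
    have hinj2 : Set.InjOn
        (fun t : Fin n × (Fin n → Fin M) × (Fin n → Fin M) =>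
          (t.2.2, t.1, decide ((t.2.2 t.1 : ℕ) = (t.2.1 t.1 : ℕ) + 1))) ↑TX := by
      intro t ht t' ht' heq
      simp only [Finset.mem_coe] at ht ht'
      have h1 := Finset.mem_filter.mp (Finset.mem_filter.mp ht).1
      have h2 := Finset.mem_filter.mp (Finset.mem_filter.mp ht').1
      simp only [Prod.mk.injEq] at heq
      obtain ⟨he1, he2, he3⟩ := heq
      have hiff := decide_eq_decide.mp (he3 : _)
      rw [← he1, ← he2] at hiff
      have g2 : GAdj t.1 t'.2.1 t.2.2 := by rw [he2, he1]; exact h2.2.1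
      have hq : t.2.1 = t'.2.1 := gadj_left_determined h1.2.1 g2 hiff
      exact Prod.ext he2 (Prod.ext hq he1)
    have h1 := Finset.card_le_card_of_injOn _ hmaps2 hinj2
    have h2 : (((Finset.univ.filter fun v => c v = 2)) ×ˢ
        (Finset.univ : Finset (Fin n × Bool))).card
        = (Finset.univ.filter fun v => c v = 2).card * (n * 2) := by
      rw [Finset.card_product, Finset.card_univ, Fintype.card_prod, Fintype.card_fin,
        Fintype.card_bool]
    rw [h2] at h1
    exact h1
  obtain ⟨k, -, hkmax⟩ := Finset.exists_max_image (Finset.univ : Finset (Fin n))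
    (fun k => (TD.filter (fun t => t.1 = k)).card) ⟨k0, Finset.mem_univ _⟩
  have hTDsum : TD.card = ∑ j ∈ (Finset.univ : Finset (Fin n)),
      (TD.filter (fun t => t.1 = j)).card :=
    Finset.card_eq_sum_card_fiberwise (fun t _ => Finset.mem_univ t.1)
  set TDk := TD.filter (fun t => t.1 = k) with hTDk
  have hTDle : TD.card ≤ n * TDk.card := by
    rw [hTDsum]
    calc ∑ j ∈ (Finset.univ : Finset (Fin n)), (TD.filter (fun t => t.1 = j)).card
        ≤ ∑ _j ∈ (Finset.univ : Finset (Fin n)), TDk.card :=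
          Finset.sum_le_sum (fun j _ => hkmax j (Finset.mem_univ _))
      _ = n * TDk.card := by
          rw [Finset.sum_const, Finset.card_univ, Fintype.card_fin, smul_eq_mul]
  set S := TDk.image (fun t => t.2.1) with hS
  have hTDkle : TDk.card ≤ 2 * S.card := by
    apply Finset.card_le_mul_card_image
    intro b hb
    apply le_trans (Finset.card_le_card_of_injOn
      (fun t => decide ((t.2.2 k : ℕ) = (t.2.1 k : ℕ) + 1))
      (fun t _ => Finset.mem_univ _) ?_) (by rw [Finset.card_univ, Fintype.card_bool])
    intro t ht t' ht' heq
    simp only [Finset.coe_filter, Set.mem_setOf_eq] at ht ht'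
    have htk : t.1 = k := (Finset.mem_filter.mp ht.1).2
    have htk' : t'.1 = k := (Finset.mem_filter.mp ht'.1).2
    have htq : t.2.1 = b := ht.2
    have htq' : t'.2.1 = b := ht'.2
    have h1 := Finset.mem_filter.mp (Finset.mem_filter.mp (Finset.mem_filter.mp ht.1).1).1
    have h2 := Finset.mem_filter.mp (Finset.mem_filter.mp (Finset.mem_filter.mp ht'.1).1).1
    have g1 : GAdj k b t.2.2 := by rw [← htk, ← htq]; exact h1.2.1
    have g2 : GAdj k b t'.2.2 := by rw [← htk', ← htq']; exact h2.2.1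
    have hiff : ((t.2.2 k : ℕ) = (b k : ℕ) + 1) ↔ ((t'.2.2 k : ℕ) = (b k : ℕ) + 1) := by
      have := decide_eq_decide.mp (heq : _)
      rw [htq, htq'] at this
      exact this
    have hq2 : t.2.2 = t'.2.2 := gadj_right_determined g1 g2 hiff
    exact Prod.ext (htk.trans htk'.symm) (Prod.ext (htq.trans htq'.symm) hq2)
  -- choose w
  set w : (Fin n → Fin M) → (Fin n → Fin M) := fun q =>
    if h : ∃ q', (k, q, q') ∈ TD then h.choose else q with hw
  refine ⟨k, S, w, ?_, ?_⟩
  · intro v hv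
    obtain ⟨t, htmem, htv⟩ := Finset.mem_image.mp hv
    have htk : t.1 = k := (Finset.mem_filter.mp htmem).2
    have htTD : t ∈ TD := (Finset.mem_filter.mp htmem).1
    have hexw : ∃ q', (k, v, q') ∈ TD := ⟨t.2.2, by
      have : (t.1, t.2.1, t.2.2) = t := rfl
      rw [← htv, ← htk]
      rw [this]
      exact htTD⟩
    have hwv : (k, v, w v) ∈ TD := by
      rw [hw]
      simp only [dif_pos hexw]
      exact hexw.choose_spec
    have hmem2 := Finset.mem_filter.mp hwv
    have hmem3 := Finset.mem_filter.mp hmem2.1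
    obtain ⟨hadj0, hcv0, -⟩ := hmem3.2
    have hadj : GAdj k v (w v) := hadj0
    have hcv : c v = 0 := hcv0
    have hcw : c (w v) = 1 := hmem2.2
    refine ⟨hcv, hcw, ?_⟩
    intro i
    by_cases hik : i = k
    · subst hik
      rcases hadj.2 with hc | hc <;> omega
    · rw [hadj.1 i hik]
      omega
  · calc (Finset.univ.filter fun v => c v = 0).card *
        (Finset.univ.filter fun v => c v = 1).card
        = AxD.card := (Finset.card_product _ _).symm
      _ ≤ T0.card * M ^ (n + 1) := hcardA
      _ ≤ (TD.card + TX.card) * M ^ (n + 1) := Nat.mul_le_mul_right _ hsplit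
      _ ≤ (n * (2 * S.card) + (Finset.univ.filter fun v => c v = 2).card * (n * 2)) *
            M ^ (n + 1) := by
          apply Nat.mul_le_mul_right
          exact Nat.add_le_add (le_trans hTDle (Nat.mul_le_mul_left _ hTDkle)) hTXcard
      _ = 2 * n * M ^ (n + 1) * (S.card + (Finset.univ.filter fun v => c v = 2).card) := by
          ring

open MeasureTheory ENNReal

section Cells

variable {n M : ℕ}

def cell (a : Spc n) (R : ℝ) (M : ℕ) (v : Fin n → Fin M) : Set (Spc n) :=
  {x : Spc n | ∀ i : Fin n,
    x i ∈ Set.Ico (a i + (v i : ℝ) * R) (a i + ((v i : ℝ) + 1) * R)}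

lemma coord_set_eq (S : Fin n → Set ℝ) :
    {x : Spc n | ∀ i, x i ∈ S i} =
      ((MeasurableEquiv.toLp 2 (Fin n → ℝ)).symm) ⁻¹' (Set.univ.pi S) := by
  ext x
  simp only [Set.mem_setOf_eq, Set.mem_preimage, Set.mem_pi, Set.mem_univ, forall_true_left]
  rfl

lemma measurableSet_coord_set {S : Fin n → Set ℝ} (hS : ∀ i, MeasurableSet (S i)) :
    MeasurableSet {x : Spc n | ∀ i, x i ∈ S i} := by
  rw [coord_set_eq]
  exact ((MeasurableEquiv.toLp 2 (Fin n → ℝ)).symm).measurable (MeasurableSet.univ_pi hS)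

lemma volume_coord_set {S : Fin n → Set ℝ} (hS : ∀ i, MeasurableSet (S i)) :
    volume {x : Spc n | ∀ i, x i ∈ S i} = ∏ i, volume (S i) := by
  rw [coord_set_eq]
  rw [(EuclideanSpace.volume_preserving_symm_measurableEquiv_toLp (Fin n)).measure_preimage
    (MeasurableSet.univ_pi hS).nullMeasurableSet]
  exact volume_pi_pi S

lemma measurableSet_cell (a : Spc n) (R : ℝ) (v : Fin n → Fin M) :
    MeasurableSet (cell a R M v) :=
  measurableSet_coord_set (fun _ => measurableSet_Ico)

lemma measurableSet_cube (a : Spc n) (h : ℝ) : MeasurableSet (Cube n a h) :=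
  measurableSet_coord_set (fun _ => measurableSet_Icc)

lemma volume_cell (a : Spc n) {R : ℝ} (hR : 0 ≤ R) (v : Fin n → Fin M) :
    volume (cell a R M v) = ENNReal.ofReal (R ^ n) := by
  rw [cell, volume_coord_set (fun _ => measurableSet_Ico)]
  have : ∀ i : Fin n, volume (Set.Ico (a i + (v i : ℝ) * R) (a i + ((v i : ℝ) + 1) * R))
      = ENNReal.ofReal R := by
    intro i
    rw [Real.volume_Ico]
    congr 1
    ring
  simp only [this]
  rw [Finset.prod_const, Finset.card_univ, Fintype.card_fin, ← ENNReal.ofReal_pow hR]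

lemma volume_cube (a : Spc n) {h : ℝ} (hh : 0 ≤ h) :
    volume (Cube n a h) = ENNReal.ofReal (h ^ n) := by
  rw [Cube, volume_coord_set (fun _ => measurableSet_Icc)]
  have : ∀ i : Fin n, volume (Set.Icc (a i) (a i + h)) = ENNReal.ofReal h := by
    intro i
    rw [Real.volume_Icc]
    congr 1
    ring
  simp only [this]
  rw [Finset.prod_const, Finset.card_univ, Fintype.card_fin, ← ENNReal.ofReal_pow hh]

lemma cells_disjoint (a : Spc n) {R : ℝ} (hR : 0 < R) :
    Set.PairwiseDisjoint (Set.univ : Set (Fin n → Fin M)) (cell a R M) := by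
  intro v _ w _ hvw
  rw [Function.onFun, Set.disjoint_left]
  intro x hxv hxw
  have : ∃ i, v i ≠ w i := by
    by_contra hcon
    push_neg at hcon
    exact hvw (funext hcon)
  obtain ⟨i, hi⟩ := this
  have h1 := hxv i
  have h2 := hxw i
  simp only [Set.mem_Ico] at h1 h2
  rcases Nat.lt_or_ge (v i : ℕ) (w i : ℕ) with hlt | hge
  · have : ((v i : ℝ) + 1) ≤ (w i : ℝ) := by
      have : ((v i : ℕ) : ℝ) + 1 ≤ ((w i : ℕ) : ℝ) := by exact_mod_cast hlt
      exact_mod_cast this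
    nlinarith [h1.2, h2.1]
  · have hlt2 : (w i : ℕ) < (v i : ℕ) := by
      rcases Nat.lt_or_ge (w i : ℕ) (v i : ℕ) with h | h
      · exact h
      · exact absurd (Fin.ext (le_antisymm h hge)) hi
    have : ((w i : ℝ) + 1) ≤ (v i : ℝ) := by
      have : ((w i : ℕ) : ℝ) + 1 ≤ ((v i : ℕ) : ℝ) := by exact_mod_cast hlt2
      exact_mod_cast this
    nlinarith [h1.1, h2.2]

lemma cell_cover (a : Spc n) {R : ℝ} (hR : 0 < R) {x : Spc n}
    (hx : ∀ i, a i ≤ x i ∧ x i < a i + M * R) : ∃ v, x ∈ cell a R M v := by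
  have key : ∀ i : Fin n, ∃ j : Fin M,
      a i + (j : ℝ) * R ≤ x i ∧ x i < a i + ((j : ℝ) + 1) * R := by
    intro i
    set t := x i - a i with ht
    have ht0 : 0 ≤ t := by have := (hx i).1; simp [ht]; linarith
    have htM : t < M * R := by have := (hx i).2; simp [ht]; linarith
    have hdiv : t / R < M := by
      rw [div_lt_iff₀ hR]
      linarith
    have hjM : ⌊t / R⌋₊ < M := by
      have h0 : 0 ≤ t / R := div_nonneg ht0 hR.le
      exact Nat.floor_lt h0 |>.mpr hdiv
    refine ⟨⟨⌊t / R⌋₊, hjM⟩, ?_, ?_⟩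
    · have : (⌊t / R⌋₊ : ℝ) ≤ t / R := Nat.floor_le (div_nonneg ht0 hR.le)
      have := (mul_le_mul_iff_of_pos_right hR).mpr this
      rw [div_mul_cancel₀ t hR.ne'] at this
      simp only []
      linarith
    · have : t / R < ⌊t / R⌋₊ + 1 := Nat.lt_floor_add_one _
      have := (mul_lt_mul_iff_of_pos_right hR).mpr this
      rw [div_mul_cancel₀ t hR.ne'] at this
      simp only []
      linarith
  choose v hv using key
  exact ⟨v, fun i => Set.mem_Ico.mpr (hv i)⟩

lemma hyperplane_null (i : Fin n) (c : ℝ) : volume {x : Spc n | x i = c} = 0 := by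
  have heq : {x : Spc n | x i = c} =
      {x : Spc n | ∀ j, x j ∈ (fun j => if j = i then {c} else Set.univ) j} := by
    ext x
    simp only [Set.mem_setOf_eq]
    constructor
    · intro hx j
      by_cases hj : j = i
      · subst hj; simp [hx]
      · simp [hj]
    · intro hx
      have := hx i
      simpa using this
  rw [heq, volume_coord_set]
  · apply Finset.prod_eq_zero (Finset.mem_univ i)
    simp
  · intro j
    by_cases hj : j = i <;> simp [hj]

lemma sum_volume_cells {a : Spc n} {R : ℝ} (hR : 0 < R) {E : Set (Spc n)}
    (hE : MeasurableSet E) (hEQ : E ⊆ Cube n a (M * R)) :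
    ∑ v : Fin n → Fin M, volume (E ∩ cell a R M v) = volume E := by
  classical
  have hdisj : Set.PairwiseDisjoint (↑(Finset.univ : Finset (Fin n → Fin M)))
      (fun v => E ∩ cell a R M v) := by
    intro v hv w hw hvw
    exact Disjoint.mono Set.inter_subset_right Set.inter_subset_right
      (cells_disjoint a hR (Set.mem_univ v) (Set.mem_univ w) hvw)
  have hmeas : ∀ v ∈ (Finset.univ : Finset (Fin n → Fin M)),
      MeasurableSet (E ∩ cell a R M v) :=
    fun v _ => hE.inter (measurableSet_cell a R v)
  rw [← measure_biUnion_finset hdisj hmeas]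
  have hsub : E ⊆ (⋃ v ∈ (Finset.univ : Finset (Fin n → Fin M)), E ∩ cell a R M v) ∪
      (⋃ i : Fin n, {x : Spc n | x i = a i + M * R}) := by
    intro x hx
    by_cases hcov : ∀ i, a i ≤ x i ∧ x i < a i + M * R
    · obtain ⟨v, hv⟩ := cell_cover a hR hcov
      exact Or.inl (Set.mem_biUnion (Finset.mem_univ v) ⟨hx, hv⟩)
    · push_neg at hcov
      obtain ⟨i, hi⟩ := hcov
      have hq := hEQ hx i
      simp only [Set.mem_Icc] at hq
      have : x i = a i + M * R := le_antisymm hq.2 (hi hq.1)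
      exact Or.inr (Set.mem_iUnion.mpr ⟨i, this⟩)
  have hnull : volume (⋃ i : Fin n, {x : Spc n | x i = a i + M * R}) = 0 := by
    apply measure_iUnion_null
    intro i
    exact hyperplane_null i _
  apply le_antisymm
  · apply measure_mono
    exact Set.iUnion₂_subset (fun v _ => Set.inter_subset_left)
  · calc volume E ≤ volume ((⋃ v ∈ (Finset.univ : Finset (Fin n → Fin M)),
        E ∩ cell a R M v) ∪ (⋃ i : Fin n, {x : Spc n | x i = a i + M * R})) :=
        measure_mono hsub
      _ ≤ volume (⋃ v ∈ (Finset.univ : Finset (Fin n → Fin M)), E ∩ cell a R M v) +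
          volume (⋃ i : Fin n, {x : Spc n | x i = a i + M * R}) := measure_union_le _ _
      _ = volume (⋃ v ∈ (Finset.univ : Finset (Fin n → Fin M)), E ∩ cell a R M v) := by
          rw [hnull, add_zero]

lemma norm_le_of_coords {x y : Spc n} {b : ℝ} (hb : 0 ≤ b) (hc : ∀ i, |x i - y i| ≤ b) :
    ‖x - y‖ ≤ b * Real.sqrt n := by
  rw [EuclideanSpace.norm_eq]
  have h1 : ∀ i : Fin n, ‖(x - y) i‖ ^ 2 ≤ b ^ 2 := by
    intro i
    have h2 : ‖(x - y) i‖ = |x i - y i| := by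
      have h3 : (x - y) i = x i - y i := rfl
      rw [h3, Real.norm_eq_abs]
    rw [h2]
    have := hc i
    nlinarith [abs_nonneg (x i - y i)]
  calc Real.sqrt (∑ i, ‖(x - y) i‖ ^ 2) ≤ Real.sqrt (∑ _i : Fin n, b ^ 2) :=
      Real.sqrt_le_sqrt (Finset.sum_le_sum (fun i _ => h1 i))
    _ = Real.sqrt (n * b ^ 2) := by
        rw [Finset.sum_const, Finset.card_univ, Fintype.card_fin, nsmul_eq_mul]
    _ = b * Real.sqrt n := by
        rw [Real.sqrt_mul (Nat.cast_nonneg n), Real.sqrt_sq hb, mul_comm]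

lemma cell_dist {a : Spc n} {R : ℝ} (hR : 0 < R) {v w : Fin n → Fin M}
    (hprox : ∀ i, (v i : ℕ) ≤ (w i : ℕ) + 1 ∧ (w i : ℕ) ≤ (v i : ℕ) + 1)
    {x y : Spc n} (hx : x ∈ cell a R M v) (hy : y ∈ cell a R M w) :
    ‖x - y‖ ≤ 2 * R * Real.sqrt n := by
  apply norm_le_of_coords (by positivity)
  intro i
  have h1 := hx i
  have h2 := hy i
  simp only [Set.mem_Ico] at h1 h2
  have hc1 : (v i : ℝ) ≤ (w i : ℝ) + 1 := by exact_mod_cast (hprox i).1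
  have hc2 : (w i : ℝ) ≤ (v i : ℝ) + 1 := by exact_mod_cast (hprox i).2
  rw [abs_le]
  constructor <;> nlinarith [h1.1, h1.2, h2.1, h2.2]

lemma cube_dist {a : Spc n} {h : ℝ} (hh : 0 ≤ h) {x y : Spc n}
    (hx : x ∈ Cube n a h) (hy : y ∈ Cube n a h) : ‖x - y‖ ≤ h * Real.sqrt n := by
  apply norm_le_of_coords hh
  intro i
  have h1 := hx i
  have h2 := hy i
  simp only [Set.mem_Icc] at h1 h2
  rw [abs_le]
  constructor <;> linarith [h1.1, h1.2, h2.1, h2.2]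

end Cells

section Core

lemma vol_toReal_ge {n : ℕ} {E : Set (Spc n)} {a : Spc n} {h t : ℝ}
    (hh : 0 ≤ h) (hEQ : E ⊆ Cube n a h) (ht : ENNReal.ofReal t ≤ volume E) :
    t ≤ (volume E).toReal := by
  have hfin : volume E ≠ ⊤ := by
    apply ne_top_of_le_ne_top _ (measure_mono hEQ)
    rw [volume_cube a hh]
    exact ofReal_ne_top
  rcases le_or_gt t 0 with h0 | h0
  · exact le_trans h0 ENNReal.toReal_nonneg
  · have := ENNReal.toReal_mono hfin ht
    rwa [ENNReal.toReal_ofReal h0.le] at this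

set_option maxHeartbeats 2000000 in
lemma core_estimate {n M : ℕ} (hn : 0 < n) (hM : 0 < M) {s : ℝ}
    (hs : s ∈ Set.Ioo (1 / 2 : ℝ) 1)
    {σ₀ : ℝ} (hσ0 : 0 < σ₀) (hσhalf : σ₀ ≤ 1 / 2)
    (a : Spc n) {h R : ℝ} (hR : 0 < R) (hhR : h = M * R)
    (A D : Set (Spc n)) (hA : MeasurableSet A) (hD : MeasurableSet D)
    (hdisj : Disjoint A D) (hAQ : A ⊆ Cube n a h) (hDQ : D ⊆ Cube n a h)
    (hAm : ENNReal.ofReal (σ₀ * h ^ n) ≤ volume A)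
    (hDm : ENNReal.ofReal (σ₀ * h ^ n) ≤ volume D)
    (hXm : (volume (Cube n a h \ (A ∪ D))).toReal ≤ σ₀ ^ 2 / (32 * n) * h ^ (n - 1) * R) :
    ENNReal.ofReal ((σ₀ ^ 2 / (16 * n)) * (M : ℝ) ^ (n - 1) * ((σ₀ / 4) * R ^ n) ^ 2 *
      (2 * R * Real.sqrt n) ^ (-((n : ℝ) + 2 * s))) ≤ Ldb n s A D := by
  classical
  have hh : 0 < h := by
    rw [hhR]; positivity
  set B := Cube n a h \ (A ∪ D) with hB
  have hBQ : B ⊆ Cube n a h := Set.diff_subset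
  have hBmeas : MeasurableSet B := (measurableSet_cube a h).diff (hA.union hD)
  set θ : ℝ := (σ₀ / 4) * R ^ n with hθ
  have hθpos : 0 < θ := by positivity
  set mA : (Fin n → Fin M) → ℝ := fun v => (volume (A ∩ cell a R M v)).toReal with hmA
  set mD : (Fin n → Fin M) → ℝ := fun v => (volume (D ∩ cell a R M v)).toReal with hmD
  set mB : (Fin n → Fin M) → ℝ := fun v => (volume (B ∩ cell a R M v)).toReal with hmB
  have hcellsub : ∀ v : Fin n → Fin M, cell a R M v ⊆ Cube n a h := by
    intro v x hx i
    have := hx i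
    simp only [Set.mem_Ico] at this
    have hviM : ((v i : ℕ) : ℝ) + 1 ≤ (M : ℝ) := by
      have : (v i : ℕ) + 1 ≤ M := (v i).isLt
      exact_mod_cast this
    constructor
    · nlinarith [this.1, hR]
    · rw [hhR]
      nlinarith [this.2, hR]
  have hfin : ∀ E : Set (Spc n), E ⊆ Cube n a h → volume E ≠ ⊤ := by
    intro E hEQ
    apply ne_top_of_le_ne_top _ (measure_mono hEQ)
    rw [volume_cube a hh.le]
    exact ofReal_ne_top
  have hcellfin : ∀ (E : Set (Spc n)) v, volume (E ∩ cell a R M v) ≠ ⊤ := by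
    intro E v
    apply ne_top_of_le_ne_top _ (measure_mono Set.inter_subset_right)
    rw [volume_cell a hR.le]
    exact ofReal_ne_top
  -- partition identity
  have hpart : ∀ v, mA v + mD v + mB v = R ^ n := by
    intro v
    have e1 : volume (cell a R M v ∩ A) + volume (cell a R M v \ A) = volume (cell a R M v) :=
      measure_inter_add_diff _ hA
    have e2 : volume ((cell a R M v \ A) ∩ D) + volume ((cell a R M v \ A) \ D) =
        volume (cell a R M v \ A) := measure_inter_add_diff _ hD
    have hset1 : cell a R M v ∩ A = A ∩ cell a R M v := Set.inter_comm _ _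
    have hset2 : (cell a R M v \ A) ∩ D = D ∩ cell a R M v := by
      ext x
      constructor
      · rintro ⟨⟨hc, -⟩, hd⟩; exact ⟨hd, hc⟩
      · rintro ⟨hd, hc⟩
        exact ⟨⟨hc, fun ha => (Set.disjoint_left.mp hdisj ha) hd⟩, hd⟩
    have hset3 : (cell a R M v \ A) \ D = B ∩ cell a R M v := by
      ext x
      constructor
      · rintro ⟨⟨hc, hna⟩, hnd⟩
        exact ⟨⟨hcellsub v hc, fun hx => hx.elim hna hnd⟩, hc⟩
      · rintro ⟨⟨-, hnad⟩, hc⟩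
        exact ⟨⟨hc, fun ha => hnad (Or.inl ha)⟩, fun hd => hnad (Or.inr hd)⟩
    rw [hset1] at e1
    rw [hset2, hset3] at e2
    have etot : volume (A ∩ cell a R M v) + (volume (D ∩ cell a R M v) +
        volume (B ∩ cell a R M v)) = volume (cell a R M v) := by
      rw [← e1, ← e2]
    have := congrArg ENNReal.toReal etot
    rw [ENNReal.toReal_add (hcellfin A v) (by
        exact ENNReal.add_ne_top.mpr ⟨hcellfin D v, hcellfin B v⟩),
      ENNReal.toReal_add (hcellfin D v) (hcellfin B v), volume_cell a hR.le,
      ENNReal.toReal_ofReal (by positivity)] at this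
    simp only [hmA, hmD, hmB]
    linarith [this]
  have hm_nonneg : ∀ v, 0 ≤ mA v ∧ 0 ≤ mD v ∧ 0 ≤ mB v := by
    intro v
    exact ⟨ENNReal.toReal_nonneg, ENNReal.toReal_nonneg, ENNReal.toReal_nonneg⟩
  have hmA_le : ∀ v, mA v ≤ R ^ n := by
    intro v
    have := hpart v
    have h1 := (hm_nonneg v).2.1
    have h2 := (hm_nonneg v).2.2
    linarith
  have hmD_le : ∀ v, mD v ≤ R ^ n := by
    intro v
    have := hpart v
    have h1 := (hm_nonneg v).1
    have h2 := (hm_nonneg v).2.2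
    linarith
  -- sums
  have hQMR : Cube n a (M * R) = Cube n a h := by rw [hhR]
  have hsumA : ∑ v : Fin n → Fin M, mA v = (volume A).toReal := by
    rw [hmA, ← ENNReal.toReal_sum (fun v _ => hcellfin A v)]
    congr 1
    rw [sum_volume_cells hR hA (by rw [hQMR]; exact hAQ)]
  have hsumD : ∑ v : Fin n → Fin M, mD v = (volume D).toReal := by
    rw [hmD, ← ENNReal.toReal_sum (fun v _ => hcellfin D v)]
    congr 1
    rw [sum_volume_cells hR hD (by rw [hQMR]; exact hDQ)]
  have hsumB : ∑ v : Fin n → Fin M, mB v = (volume B).toReal := by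
    rw [hmB, ← ENNReal.toReal_sum (fun v _ => hcellfin B v)]
    congr 1
    rw [sum_volume_cells hR hBmeas (by rw [hQMR]; exact hBQ)]
  have hAtot : σ₀ * h ^ n ≤ ∑ v : Fin n → Fin M, mA v := by
    rw [hsumA]; exact vol_toReal_ge hh.le hAQ hAm
  have hDtot : σ₀ * h ^ n ≤ ∑ v : Fin n → Fin M, mD v := by
    rw [hsumD]; exact vol_toReal_ge hh.le hDQ hDm
  have hMn : (0:ℝ) < (M:ℝ) := by exact_mod_cast hM
  have hhn : h ^ n = (M:ℝ) ^ n * R ^ n := by rw [hhR, mul_pow]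
  -- counting
  have hcount : ∀ (f : (Fin n → Fin M) → ℝ), (∀ v, f v ≤ R ^ n) → (∀ v, 0 ≤ f v) →
      σ₀ * h ^ n ≤ ∑ v, f v →
      (3 * σ₀ / 4) * (M:ℝ) ^ n ≤ ((Finset.univ.filter fun v => θ ≤ f v).card : ℝ) := by
    intro f hle h0 htot
    have hsplit := Finset.sum_filter_add_sum_filter_not Finset.univ (fun v => θ ≤ f v) f
    have h1 : ∑ v ∈ Finset.univ.filter (fun v => θ ≤ f v), f v ≤
        ((Finset.univ.filter fun v => θ ≤ f v).card : ℝ) * R ^ n := by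
      calc ∑ v ∈ Finset.univ.filter (fun v => θ ≤ f v), f v ≤
          ∑ _v ∈ Finset.univ.filter (fun v => θ ≤ f v), R ^ n :=
            Finset.sum_le_sum (fun v _ => hle v)
        _ = _ := by rw [Finset.sum_const, nsmul_eq_mul]
    have h2 : ∑ v ∈ Finset.univ.filter (fun v => ¬ θ ≤ f v), f v ≤ (M:ℝ) ^ n * θ := by
      calc ∑ v ∈ Finset.univ.filter (fun v => ¬ θ ≤ f v), f v ≤
          ∑ _v ∈ Finset.univ.filter (fun v => ¬ θ ≤ f v), θ :=
            Finset.sum_le_sum (fun v hv => le_of_not_ge (Finset.mem_filter.mp hv).2)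
        _ = ((Finset.univ.filter fun v => ¬ θ ≤ f v).card : ℝ) * θ := by
            rw [Finset.sum_const, nsmul_eq_mul]
        _ ≤ (M:ℝ) ^ n * θ := by
            apply mul_le_mul_of_nonneg_right _ hθpos.le
            have : (Finset.univ.filter fun v => ¬ θ ≤ f v).card ≤ M ^ n := by
              calc (Finset.univ.filter fun v => ¬ θ ≤ f v).card ≤
                  (Finset.univ : Finset (Fin n → Fin M)).card :=
                    Finset.card_le_card (Finset.filter_subset _ _)
                _ = M ^ n := by rw [Finset.card_univ, Fintype.card_fun, Fintype.card_fin,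
                    Fintype.card_fin]
            exact_mod_cast this
    have hRn : (0:ℝ) < R ^ n := by positivity
    rw [hhn] at htot
    have key : σ₀ * ((M:ℝ) ^ n * R ^ n) ≤
        ((Finset.univ.filter fun v => θ ≤ f v).card : ℝ) * R ^ n + (M:ℝ) ^ n * θ := by
      calc σ₀ * ((M:ℝ) ^ n * R ^ n) ≤ ∑ v, f v := htot
        _ = _ + _ := hsplit.symm
        _ ≤ _ := add_le_add h1 h2
    rw [hθ] at key
    have hMRn : (0:ℝ) ≤ (M:ℝ)^n := by positivity
    nlinarith [key, hRn]
  -- colors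
  set c : (Fin n → Fin M) → Fin 3 := fun v =>
    if θ ≤ mA v then 0 else if θ ≤ mD v then 1 else 2 with hcdef
  have hc0 : ∀ v, c v = 0 ↔ θ ≤ mA v := by
    intro v
    rw [hcdef]
    by_cases h1 : θ ≤ mA v
    · simp [h1]
    · by_cases h2 : θ ≤ mD v <;> simp [h1, h2]
  have hc1 : ∀ v, c v = 1 ↔ (¬ θ ≤ mA v ∧ θ ≤ mD v) := by
    intro v
    rw [hcdef]
    by_cases h1 : θ ≤ mA v
    · simp [h1]
    · by_cases h2 : θ ≤ mD v <;> simp [h1, h2]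
  have hc2 : ∀ v, c v = 2 ↔ (¬ θ ≤ mA v ∧ ¬ θ ≤ mD v) := by
    intro v
    rw [hcdef]
    by_cases h1 : θ ≤ mA v
    · simp [h1]
    · by_cases h2 : θ ≤ mD v <;> simp [h1, h2]
  set c₁ : ℝ := σ₀ ^ 2 / (16 * n) with hc₁
  have hnR : (0:ℝ) < (n:ℝ) := by exact_mod_cast hn
  have hc₁pos : 0 < c₁ := by rw [hc₁]; positivity
  have hN0 : (0:ℝ) < (M:ℝ) ^ (n - 1) := by positivity
  have hN1 : (0:ℝ) < (M:ℝ) ^ (n + 1) := by positivity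
  have hRn : (0:ℝ) < R ^ n := by positivity
  have hRn1 : R ^ n = R ^ (n - 1) * R := by
    rw [← pow_succ]
    congr 1
    omega
  have hMn1 : (M:ℝ) ^ n = (M:ℝ) ^ (n - 1) * (M:ℝ) := by
    rw [← pow_succ]
    congr 1
    omega
  have hM1 : (1:ℝ) ≤ (M:ℝ) := by exact_mod_cast hM
  have hMn1le : (M:ℝ) ^ (n - 1) ≤ (M:ℝ) ^ n := by
    rw [hMn1]
    nlinarith [hN0]
  -- X count
  have hcX : ((Finset.univ.filter fun v => c v = 2).card : ℝ) ≤ c₁ * (M:ℝ) ^ (n - 1) := by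
    have hlow : ∀ v ∈ Finset.univ.filter (fun v => c v = 2), R ^ n / 2 ≤ mB v := by
      intro v hv
      obtain ⟨h1, h2⟩ := (hc2 v).mp (Finset.mem_filter.mp hv).2
      have := hpart v
      push_neg at h1 h2
      have hθb : θ ≤ R ^ n / 4 := by
        rw [hθ]
        nlinarith [hRn]
      nlinarith [this, h1, h2]
    have hsum1 : ((Finset.univ.filter fun v => c v = 2).card : ℝ) * (R ^ n / 2) ≤
        ∑ v ∈ Finset.univ.filter (fun v => c v = 2), mB v := by
      calc ((Finset.univ.filter fun v => c v = 2).card : ℝ) * (R ^ n / 2)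
          = ∑ _v ∈ Finset.univ.filter (fun v => c v = 2), R ^ n / 2 := by
            rw [Finset.sum_const, nsmul_eq_mul]
        _ ≤ _ := Finset.sum_le_sum hlow
    have hsum2 : ∑ v ∈ Finset.univ.filter (fun v => c v = 2), mB v ≤
        ∑ v : Fin n → Fin M, mB v :=
      Finset.sum_le_sum_of_subset_of_nonneg (Finset.filter_subset _ _)
        (fun v _ _ => (hm_nonneg v).2.2)
    have hBtot : ∑ v : Fin n → Fin M, mB v ≤ σ₀ ^ 2 / (32 * n) * h ^ (n - 1) * R := by
      rw [hsumB]; exact hXm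
    have hhn1 : h ^ (n - 1) = (M:ℝ) ^ (n - 1) * R ^ (n - 1) := by rw [hhR, mul_pow]
    rw [hhn1] at hBtot
    have hRn1pos : (0:ℝ) < R ^ (n - 1) := by positivity
    have key := le_trans hsum1 (le_trans hsum2 hBtot)
    rw [hc₁]
    rw [hRn1] at key
    have h32 : σ₀ ^ 2 / (32 * ↑n) * ((M:ℝ) ^ (n - 1) * R ^ (n - 1)) * R =
        (σ₀ ^ 2 / (32 * ↑n) * (M:ℝ) ^ (n - 1)) * (R ^ (n - 1) * R) := by ring
    rw [h32] at key
    have hdiv := (mul_le_mul_iff_of_pos_right (by positivity : (0:ℝ) < R ^ (n - 1) * R)).mp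
      (by nlinarith [key] : ((Finset.univ.filter fun v => c v = 2).card : ℝ) *
        (R ^ (n - 1) * R) ≤ (σ₀ ^ 2 / (32 * ↑n) * (M:ℝ) ^ (n - 1) * 2) * (R ^ (n - 1) * R))
    have hne : (n:ℝ) ≠ 0 := hnR.ne'
    have e0' : σ₀ ^ 2 / (16 * (n:ℝ)) * (M:ℝ) ^ (n - 1) =
        σ₀ ^ 2 / (32 * (n:ℝ)) * (M:ℝ) ^ (n - 1) * 2 := by
      field_simp
      ring
    linarith [hdiv, e0']
  -- A and D counts
  have hcA : (3 * σ₀ / 4) * (M:ℝ) ^ n ≤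
      ((Finset.univ.filter fun v => c v = 0).card : ℝ) := by
    have heq : (Finset.univ.filter fun v => c v = 0) =
        (Finset.univ.filter fun v => θ ≤ mA v) :=
      Finset.filter_congr (fun v _ => hc0 v)
    rw [heq]
    exact hcount mA hmA_le (fun v => (hm_nonneg v).1) hAtot
  -- obtain S, w
  obtain ⟨S, w, hSprops, hScard⟩ :
      ∃ (S : Finset (Fin n → Fin M)) (w : (Fin n → Fin M) → (Fin n → Fin M)),
        (∀ v ∈ S, θ ≤ mA v ∧ θ ≤ mD (w v) ∧
          ∀ i, (v i : ℕ) ≤ (w v i : ℕ) + 1 ∧ (w v i : ℕ) ≤ (v i : ℕ) + 1) ∧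
        c₁ * (M:ℝ) ^ (n - 1) ≤ (S.card : ℝ) := by
    set mixed := Finset.univ.filter (fun v => θ ≤ mA v ∧ θ ≤ mD v) with hmixdef
    by_cases hmix : c₁ * (M:ℝ) ^ (n - 1) ≤ (mixed.card : ℝ)
    · refine ⟨mixed, id, ?_, hmix⟩
      intro v hv
      obtain ⟨h1, h2⟩ := (Finset.mem_filter.mp hv).2
      exact ⟨h1, h2, fun i => ⟨Nat.le_succ _, Nat.le_succ _⟩⟩
    · push_neg at hmix
      have hcD : (σ₀ / 2) * (M:ℝ) ^ n ≤
          ((Finset.univ.filter fun v => c v = 1).card : ℝ) := by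
        have hDcnt : (3 * σ₀ / 4) * (M:ℝ) ^ n ≤
            ((Finset.univ.filter fun v => θ ≤ mD v).card : ℝ) :=
          hcount mD hmD_le (fun v => (hm_nonneg v).2.1) hDtot
        have hsubD : (Finset.univ.filter fun v => θ ≤ mD v) ⊆
            (Finset.univ.filter fun v => c v = 1) ∪ mixed := by
          intro v hv
          have h2 := (Finset.mem_filter.mp hv).2
          by_cases h1 : θ ≤ mA v
          · exact Finset.mem_union_right _
              (Finset.mem_filter.mpr ⟨Finset.mem_univ _, h1, h2⟩)
          · exact Finset.mem_union_left _
              (Finset.mem_filter.mpr ⟨Finset.mem_univ _, (hc1 v).mpr ⟨h1, h2⟩⟩)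
        have hcardle : ((Finset.univ.filter fun v => θ ≤ mD v).card : ℝ) ≤
            ((Finset.univ.filter fun v => c v = 1).card : ℝ) + (mixed.card : ℝ) := by
          have h1 := le_trans (Finset.card_le_card hsubD) (Finset.card_union_le _ _)
          exact_mod_cast h1
        have hc₁small : c₁ * (M:ℝ) ^ (n - 1) ≤ (σ₀ / 4) * (M:ℝ) ^ n := by
          have h1 : c₁ ≤ σ₀ / 4 := by
            rw [hc₁, div_le_iff₀ (by positivity)]
            have hn1 : (1:ℝ) ≤ (n:ℝ) := by exact_mod_cast hn
            nlinarith [hσ0, hσhalf, hn1, mul_nonneg hσ0.le (sub_nonneg.mpr hn1)]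
          calc c₁ * (M:ℝ) ^ (n - 1) ≤ (σ₀ / 4) * (M:ℝ) ^ (n - 1) :=
              mul_le_mul_of_nonneg_right h1 hN0.le
            _ ≤ (σ₀ / 4) * (M:ℝ) ^ n :=
              mul_le_mul_of_nonneg_left hMn1le (by positivity)
        linarith [hDcnt, hcardle, hmix.le, hc₁small]
      obtain ⟨k, S, w, hprops, hineq⟩ := comb_main hn hM c
      refine ⟨S, w, ?_, ?_⟩
      · intro v hv
        obtain ⟨h0, h1, hprox⟩ := hprops v hv
        exact ⟨(hc0 v).mp h0, ((hc1 (w v)).mp h1).2, hprox⟩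
      · -- cast and arithmetic
        have hcast : ((Finset.univ.filter fun v => c v = 0).card : ℝ) *
            ((Finset.univ.filter fun v => c v = 1).card : ℝ) ≤
            2 * (n:ℝ) * (M:ℝ) ^ (n + 1) *
              ((S.card : ℝ) + ((Finset.univ.filter fun v => c v = 2).card : ℝ)) := by
          exact_mod_cast hineq
        set CA := ((Finset.univ.filter fun v => c v = 0).card : ℝ)
        set CD := ((Finset.univ.filter fun v => c v = 1).card : ℝ)
        set CX := ((Finset.univ.filter fun v => c v = 2).card : ℝ)
        set CS := ((S.card : ℝ))
        have hCA0 : (0:ℝ) ≤ CA := Nat.cast_nonneg _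
        have hCD0 : (0:ℝ) ≤ CD := Nat.cast_nonneg _
        have hCS0 : (0:ℝ) ≤ CS := Nat.cast_nonneg _
        have hα : (0:ℝ) < (σ₀ / 2) * (M:ℝ) ^ n := by positivity
        have step1 : ((σ₀ / 2) * (M:ℝ) ^ n) * ((σ₀ / 2) * (M:ℝ) ^ n) ≤ CA * CD := by
          apply mul_le_mul _ hcD hα.le hCA0
          calc (σ₀ / 2) * (M:ℝ) ^ n ≤ (3 * σ₀ / 4) * (M:ℝ) ^ n := by nlinarith [hσ0]
            _ ≤ CA := hcA
        have hMsplit : (M:ℝ) ^ n * (M:ℝ) ^ n = (M:ℝ) ^ (n + 1) * (M:ℝ) ^ (n - 1) := by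
          rw [← pow_add, ← pow_add]
          congr 1
          omega
        have step3 : (σ₀ ^ 2 / 4) * ((M:ℝ) ^ (n + 1) * (M:ℝ) ^ (n - 1)) ≤
            2 * (n:ℝ) * (M:ℝ) ^ (n + 1) * (CS + CX) := by
          calc (σ₀ ^ 2 / 4) * ((M:ℝ) ^ (n + 1) * (M:ℝ) ^ (n - 1))
              = ((σ₀ / 2) * (M:ℝ) ^ n) * ((σ₀ / 2) * (M:ℝ) ^ n) := by
                rw [← hMsplit]; ring
            _ ≤ CA * CD := step1
            _ ≤ _ := hcast
        have step4 : (σ₀ ^ 2 / 4) * (M:ℝ) ^ (n - 1) ≤ 2 * (n:ℝ) * (CS + CX) := by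
          have h1 : ((σ₀ ^ 2 / 4) * (M:ℝ) ^ (n - 1)) * (M:ℝ) ^ (n + 1) ≤
              (2 * (n:ℝ) * (CS + CX)) * (M:ℝ) ^ (n + 1) := by
            calc ((σ₀ ^ 2 / 4) * (M:ℝ) ^ (n - 1)) * (M:ℝ) ^ (n + 1)
                = (σ₀ ^ 2 / 4) * ((M:ℝ) ^ (n + 1) * (M:ℝ) ^ (n - 1)) := by ring
              _ ≤ 2 * (n:ℝ) * (M:ℝ) ^ (n + 1) * (CS + CX) := step3
              _ = (2 * (n:ℝ) * (CS + CX)) * (M:ℝ) ^ (n + 1) := by ring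
          exact (mul_le_mul_iff_of_pos_right hN1).mp h1
        have hCX := hcX
        rw [hc₁] at hCX ⊢
        have hne : (n:ℝ) ≠ 0 := hnR.ne'
        have h2 : 2 * (n:ℝ) * CX ≤ 2 * (n:ℝ) * (σ₀ ^ 2 / (16 * ↑n) * (M:ℝ) ^ (n - 1)) := by
          nlinarith [hCX, hnR]
        have h3 : 2 * (n:ℝ) * (σ₀ ^ 2 / (16 * ↑n) * (M:ℝ) ^ (n - 1)) =
            σ₀ ^ 2 / 8 * (M:ℝ) ^ (n - 1) := by
          field_simp
          ring
        have h4 : σ₀ ^ 2 / 8 * (M:ℝ) ^ (n - 1) ≤ 2 * (n:ℝ) * CS := by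
          nlinarith [step4, h2, h3]
        have h5 : 2 * (n:ℝ) * (σ₀ ^ 2 / (16 * ↑n) * (M:ℝ) ^ (n - 1)) ≤ 2 * (n:ℝ) * CS := by
          rw [h3]; linarith [h4]
        exact le_of_mul_le_mul_left h5 (by positivity)
  -- integral lower bound
  set p : ℝ := -((n:ℝ) + 2 * s) with hpdef
  have hppos : (0:ℝ) < (n:ℝ) + 2 * s := by nlinarith [hs.1, hnR]
  have hpneg : p ≤ 0 := by rw [hpdef]; linarith
  set κr : ℝ := (2 * R * Real.sqrt n) ^ p with hκr
  have hκrpos : 0 ≤ κr := by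
    rw [hκr]
    apply Real.rpow_nonneg
    positivity
  set κ : ℝ≥0∞ := ENNReal.ofReal κr with hκ
  set K : Spc n → Spc n → ℝ≥0∞ := fun x y => ENNReal.ofReal (‖x - y‖ ^ p) with hK
  have hLdb : Ldb n s A D = ∫⁻ x in A, ∫⁻ y in D, K x y := rfl
  have hker : ∀ v ∈ S, ∀ x ∈ A ∩ cell a R M v, ∀ y ∈ D ∩ cell a R M (w v), κ ≤ K x y := by
    intro v hv x hx y hy
    rw [hκ, hK]
    apply ENNReal.ofReal_le_ofReal
    apply Real.rpow_le_rpow_of_nonpos _ _ hpneg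
    · rw [norm_pos_iff, sub_ne_zero]
      intro hxy
      exact Set.disjoint_left.mp hdisj hx.1 (hxy ▸ hy.1)
    · exact cell_dist hR (hSprops v hv).2.2 hx.2 hy.2
  have hinner : ∀ v ∈ S, ∀ x ∈ A ∩ cell a R M v,
      ENNReal.ofReal θ * κ ≤ ∫⁻ y in D, K x y := by
    intro v hv x hx
    have hDv : ENNReal.ofReal θ ≤ volume (D ∩ cell a R M (w v)) := by
      apply ENNReal.ofReal_le_of_le_toReal
      exact (hSprops v hv).2.1
    calc ENNReal.ofReal θ * κ ≤ volume (D ∩ cell a R M (w v)) * κ :=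
        mul_le_mul_left hDv κ
      _ = κ * volume (D ∩ cell a R M (w v)) := mul_comm _ _
      _ = ∫⁻ _y in D ∩ cell a R M (w v), κ := (setLIntegral_const _ _).symm
      _ ≤ ∫⁻ y in D ∩ cell a R M (w v), K x y := by
          apply lintegral_mono_ae
          rw [ae_restrict_iff' (hD.inter (measurableSet_cell a R (w v)))]
          exact ae_of_all _ (fun y hy => hker v hv x hx y hy)
      _ ≤ ∫⁻ y in D, K x y :=
          lintegral_mono' (Measure.restrict_mono Set.inter_subset_left le_rfl) le_rfl
  have houter : ∀ v ∈ S, ENNReal.ofReal θ * (ENNReal.ofReal θ * κ) ≤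
      ∫⁻ x in A ∩ cell a R M v, ∫⁻ y in D, K x y := by
    intro v hv
    have hAv : ENNReal.ofReal θ ≤ volume (A ∩ cell a R M v) := by
      apply ENNReal.ofReal_le_of_le_toReal
      exact (hSprops v hv).1
    calc ENNReal.ofReal θ * (ENNReal.ofReal θ * κ)
        ≤ volume (A ∩ cell a R M v) * (ENNReal.ofReal θ * κ) :=
          mul_le_mul_left hAv _
      _ = (ENNReal.ofReal θ * κ) * volume (A ∩ cell a R M v) := mul_comm _ _
      _ = ∫⁻ _x in A ∩ cell a R M v, (ENNReal.ofReal θ * κ) := (setLIntegral_const _ _).symm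
      _ ≤ ∫⁻ x in A ∩ cell a R M v, ∫⁻ y in D, K x y := by
          apply lintegral_mono_ae
          rw [ae_restrict_iff' (hA.inter (measurableSet_cell a R v))]
          exact ae_of_all _ (fun x hx => hinner v hv x hx)
  have hdisjS : Set.PairwiseDisjoint (↑S) (fun v => A ∩ cell a R M v) := by
    intro v _ w' _ hvw
    exact Disjoint.mono Set.inter_subset_right Set.inter_subset_right
      (cells_disjoint a hR (Set.mem_univ _) (Set.mem_univ _) hvw)
  have hmeasS : ∀ v ∈ S, MeasurableSet (A ∩ cell a R M v) :=
    fun v _ => hA.inter (measurableSet_cell a R v)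
  have hsum : ∑ v ∈ S, ∫⁻ x in A ∩ cell a R M v, (∫⁻ y in D, K x y) ≤ Ldb n s A D := by
    rw [hLdb, ← lintegral_biUnion_finset hdisjS hmeasS]
    exact lintegral_mono'
      (Measure.restrict_mono (Set.iUnion₂_subset fun v _ => Set.inter_subset_left) le_rfl)
      le_rfl
  have hcards : ENNReal.ofReal (c₁ * (M:ℝ) ^ (n - 1)) ≤ (S.card : ℝ≥0∞) := by
    rw [← ENNReal.ofReal_natCast S.card]
    exact ENNReal.ofReal_le_ofReal hScard
  have hconst : c₁ * (M:ℝ) ^ (n - 1) * θ ^ 2 * κr =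
      (c₁ * (M:ℝ) ^ (n - 1)) * (θ * (θ * κr)) := by ring
  rw [hconst, ENNReal.ofReal_mul (mul_nonneg hc₁pos.le hN0.le),
    ENNReal.ofReal_mul hθpos.le, ENNReal.ofReal_mul hθpos.le]
  calc ENNReal.ofReal (c₁ * (M:ℝ) ^ (n - 1)) *
      (ENNReal.ofReal θ * (ENNReal.ofReal θ * ENNReal.ofReal κr))
      ≤ (S.card : ℝ≥0∞) * (ENNReal.ofReal θ * (ENNReal.ofReal θ * ENNReal.ofReal κr)) :=
        mul_le_mul_left hcards _
    _ = ∑ _v ∈ S, (ENNReal.ofReal θ * (ENNReal.ofReal θ * ENNReal.ofReal κr)) := by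
        rw [Finset.sum_const, nsmul_eq_mul]
    _ ≤ ∑ v ∈ S, ∫⁻ x in A ∩ cell a R M v, (∫⁻ y in D, K x y) :=
        Finset.sum_le_sum (fun v hv => by
          have := houter v hv
          rwa [hκ] at this)
    _ ≤ Ldb n s A D := hsum

end Core

section Assembly

lemma trivial_bound {n : ℕ} (hn : 0 < n) {s : ℝ} (hs : s ∈ Set.Ioo (1 / 2 : ℝ) 1)
    {σ₀ : ℝ} (hσ0 : 0 < σ₀) (a : Spc n) {h : ℝ} (hh : 0 < h)
    (A D : Set (Spc n)) (hA : MeasurableSet A) (hD : MeasurableSet D)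
    (hdisj : Disjoint A D) (hAQ : A ⊆ Cube n a h) (hDQ : D ⊆ Cube n a h)
    (hAm : ENNReal.ofReal (σ₀ * h ^ n) ≤ volume A)
    (hDm : ENNReal.ofReal (σ₀ * h ^ n) ≤ volume D) :
    ENNReal.ofReal (σ₀ * h ^ n * (σ₀ * h ^ n * (h * Real.sqrt n) ^ (-((n:ℝ) + 2 * s)))) ≤
      Ldb n s A D := by
  have hnR : (0:ℝ) < (n:ℝ) := by exact_mod_cast hn
  set p : ℝ := -((n:ℝ) + 2 * s) with hpdef
  have hppos : (0:ℝ) < (n:ℝ) + 2 * s := by nlinarith [hs.1, hnR]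
  have hpneg : p ≤ 0 := by rw [hpdef]; linarith
  set κr : ℝ := (h * Real.sqrt n) ^ p with hκr
  have hκrpos : 0 ≤ κr := by
    rw [hκr]; apply Real.rpow_nonneg; positivity
  set κ : ℝ≥0∞ := ENNReal.ofReal κr with hκ
  set K : Spc n → Spc n → ℝ≥0∞ := fun x y => ENNReal.ofReal (‖x - y‖ ^ p) with hK
  have hLdb : Ldb n s A D = ∫⁻ x in A, ∫⁻ y in D, K x y := rfl
  have hker : ∀ x ∈ A, ∀ y ∈ D, κ ≤ K x y := by
    intro x hx y hy
    rw [hκ, hK]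
    apply ENNReal.ofReal_le_ofReal
    apply Real.rpow_le_rpow_of_nonpos _ _ hpneg
    · rw [norm_pos_iff, sub_ne_zero]
      intro hxy
      exact Set.disjoint_left.mp hdisj hx (hxy ▸ hy)
    · exact cube_dist hh.le (hAQ hx) (hDQ hy)
  have hinner : ∀ x ∈ A, ENNReal.ofReal (σ₀ * h ^ n) * κ ≤ ∫⁻ y in D, K x y := by
    intro x hx
    calc ENNReal.ofReal (σ₀ * h ^ n) * κ ≤ volume D * κ := mul_le_mul_left hDm κ
      _ = κ * volume D := mul_comm _ _
      _ = ∫⁻ _y in D, κ := (setLIntegral_const _ _).symm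
      _ ≤ ∫⁻ y in D, K x y := by
          apply lintegral_mono_ae
          rw [ae_restrict_iff' hD]
          exact ae_of_all _ (fun y hy => hker x hx y hy)
  rw [hLdb, ENNReal.ofReal_mul (by positivity)]
  calc ENNReal.ofReal (σ₀ * h ^ n) * ENNReal.ofReal (σ₀ * h ^ n * κr)
      ≤ volume A * ENNReal.ofReal (σ₀ * h ^ n * κr) := mul_le_mul_left hAm _
    _ = ENNReal.ofReal (σ₀ * h ^ n * κr) * volume A := mul_comm _ _
    _ = ∫⁻ _x in A, ENNReal.ofReal (σ₀ * h ^ n * κr) := (setLIntegral_const _ _).symm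
    _ ≤ ∫⁻ x in A, ∫⁻ y in D, K x y := by
        apply lintegral_mono_ae
        rw [ae_restrict_iff' hA]
        refine ae_of_all _ (fun x hx => ?_)
        rw [ENNReal.ofReal_mul (by positivity)]
        exact hinner x hx

lemma pow_identity {n : ℕ} {M' R h s : ℝ} (hM : 0 < M') (hR : 0 < R)
    (hh : h = M' * R) :
    M' ^ ((n:ℝ) - 1) * R ^ (2 * (n:ℝ) + (-((n:ℝ) + 2 * s))) =
    h ^ ((n:ℝ) - 2 * s) * M' ^ (2 * s - 1) := by
  have e1 : M' ^ ((n:ℝ) - 2 * s) * M' ^ (2 * s - 1) = M' ^ ((n:ℝ) - 1) := by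
    rw [← Real.rpow_add hM]; congr 1; ring
  rw [hh, Real.mul_rpow hM.le hR.le]
  rw [show 2 * (n:ℝ) + (-((n:ℝ) + 2 * s)) = (n:ℝ) - 2 * s by ring]
  rw [← e1]
  ring

end Assembly

section Assembly2

lemma core_scaled {n : ℕ} (hn0 : 0 < n) {Mn : ℕ} (hMpos : 0 < Mn) {s : ℝ}
    (hs : s ∈ Set.Ioo (1 / 2 : ℝ) 1) {σ₀ : ℝ} (hσ0 : 0 < σ₀) (hσhalf : σ₀ ≤ 1 / 2)
    (a : Spc n) {h : ℝ} (hh : 0 < h)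
    (A D : Set (Spc n)) (hA : MeasurableSet A) (hD : MeasurableSet D)
    (hdisj : Disjoint A D) (hAQ : A ⊆ Cube n a h) (hDQ : D ⊆ Cube n a h)
    (hAm : ENNReal.ofReal (σ₀ * h ^ n) ≤ volume A)
    (hDm : ENNReal.ofReal (σ₀ * h ^ n) ≤ volume D)
    (hXm : (volume (Cube n a h \ (A ∪ D))).toReal ≤ σ₀ ^ 2 / (32 * n) * h ^ n / Mn) :
    ENNReal.ofReal (σ₀ ^ 2 / (16 * (n:ℝ)) * (σ₀ / 4) ^ 2 *
      (2 * Real.sqrt n) ^ (-((n:ℝ) + 2 * s)) * h ^ ((n:ℝ) - 2 * s) *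
      (Mn : ℝ) ^ (2 * s - 1)) ≤ Ldb n s A D := by
  have hMR : (0:ℝ) < (Mn:ℝ) := by exact_mod_cast hMpos
  set R : ℝ := h / Mn with hRdef
  have hR : 0 < R := by rw [hRdef]; positivity
  have hhR : h = Mn * R := by rw [hRdef]; field_simp
  have hXm' : (volume (Cube n a h \ (A ∪ D))).toReal ≤ σ₀ ^ 2 / (32 * n) * h ^ (n - 1) * R := by
    have e : σ₀ ^ 2 / (32 * (n:ℝ)) * h ^ (n - 1) * R = σ₀ ^ 2 / (32 * n) * h ^ n / Mn := by
      rw [hRdef]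
      have : (h:ℝ) ^ (n - 1) * h = h ^ n := by
        rw [← pow_succ]
        congr 1
        omega
      field_simp
      exact this
    rw [e]
    exact hXm
  have hcore := core_estimate hn0 hMpos hs hσ0 hσhalf a hR hhR A D hA hD hdisj hAQ hDQ
    hAm hDm hXm'
  refine le_trans (le_of_eq ?_) hcore
  congr 1
  -- algebraic identity
  have e1 : ((σ₀ / 4) * R ^ n) ^ 2 = (σ₀ / 4) ^ 2 * R ^ (2 * n) := by
    rw [mul_pow, ← pow_mul, Nat.mul_comm]
  have e2 : (2 * R * Real.sqrt n) ^ (-((n:ℝ) + 2 * s)) =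
      (2 * Real.sqrt n) ^ (-((n:ℝ) + 2 * s)) * R ^ (-((n:ℝ) + 2 * s)) := by
    rw [show (2 * R * Real.sqrt n) = (2 * Real.sqrt n) * R by ring,
      Real.mul_rpow (by positivity) hR.le]
  have e3 : (Mn:ℝ) ^ (n - 1) = (Mn:ℝ) ^ ((n:ℝ) - 1) := by
    rw [← Real.rpow_natCast (Mn:ℝ) (n - 1)]
    congr 1
    rw [Nat.cast_sub hn0]
    norm_num
  have e4 : (R:ℝ) ^ (2 * n) = R ^ (2 * (n:ℝ)) := by
    rw [← Real.rpow_natCast R (2 * n)]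
    congr 1
    push_cast
    ring
  have e5 : R ^ (2 * (n:ℝ)) * R ^ (-((n:ℝ) + 2 * s)) =
      R ^ (2 * (n:ℝ) + (-((n:ℝ) + 2 * s))) := (Real.rpow_add hR _ _).symm
  have e6 := pow_identity (n := n) (s := s) hMR hR hhR
  rw [e1, e2, e3, e4]
  calc σ₀ ^ 2 / (16 * (n:ℝ)) * (σ₀ / 4) ^ 2 * (2 * Real.sqrt n) ^ (-((n:ℝ) + 2 * s)) *
        h ^ ((n:ℝ) - 2 * s) * (Mn:ℝ) ^ (2 * s - 1)
      = σ₀ ^ 2 / (16 * (n:ℝ)) * (σ₀ / 4) ^ 2 * (2 * Real.sqrt n) ^ (-((n:ℝ) + 2 * s)) *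
        (h ^ ((n:ℝ) - 2 * s) * (Mn:ℝ) ^ (2 * s - 1)) := by ring
    _ = σ₀ ^ 2 / (16 * (n:ℝ)) * (σ₀ / 4) ^ 2 * (2 * Real.sqrt n) ^ (-((n:ℝ) + 2 * s)) *
        ((Mn:ℝ) ^ ((n:ℝ) - 1) * R ^ (2 * (n:ℝ) + (-((n:ℝ) + 2 * s)))) := by rw [e6]
    _ = σ₀ ^ 2 / (16 * ↑n) * (Mn:ℝ) ^ ((n:ℝ) - 1) *
        ((σ₀ / 4) ^ 2 * R ^ (2 * (n:ℝ))) *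
        ((2 * Real.sqrt n) ^ (-((n:ℝ) + 2 * s)) * R ^ (-((n:ℝ) + 2 * s))) := by
      rw [← e5]; ring

end Assembly2


set_option maxHeartbeats 1000000 in
/-- localized estimate for `s ∈ (1/2,1)`. If `A, D ⊆ Q` are disjoint with
`min{|A|,|D|} ≥ σ|Q|` and `B := Q ∖ (A ∪ D)`, then
`L(A,D) ≥ δ |Q|^{(n-2s)/n} (|Q|/|B|)^{2s-1}`; here the extended-real quotient and power
make the right-hand side `+∞` when `|B| = 0`. -/
theorem localized_estimate_supercritical (n : ℕ) (hn : 2 ≤ n) (s : ℝ)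
    (hs : s ∈ Set.Ioo (1 / 2 : ℝ) 1) (σ : ℝ) (hσ : 0 < σ) :
    ∃ δ : ℝ, 0 < δ ∧ ∀ (a : Spc n) (h : ℝ), 0 < h → ∀ A D : Set (Spc n),
      MeasurableSet A → MeasurableSet D → Disjoint A D →
      A ⊆ Cube n a h → D ⊆ Cube n a h →
      ENNReal.ofReal σ * volume (Cube n a h) ≤ volume A →
      ENNReal.ofReal σ * volume (Cube n a h) ≤ volume D →
      ENNReal.ofReal (δ * (volume (Cube n a h)).toReal ^ (((n : ℝ) - 2 * s) / n)) *
          (volume (Cube n a h) / volume (Cube n a h \ (A ∪ D))) ^ (2 * s - 1) ≤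
        Ldb n s A D := by
  have hn0 : 0 < n := by omega
  have hnR : (0:ℝ) < (n:ℝ) := by exact_mod_cast hn0
  obtain ⟨hs1, hs2⟩ := hs
  have hs21 : (0:ℝ) < 2 * s - 1 := by linarith
  set σ₀ := min σ (1 / 2 : ℝ) with hσ₀def
  have hσ0 : 0 < σ₀ := lt_min hσ (by norm_num)
  have hσhalf : σ₀ ≤ 1 / 2 := min_le_right _ _
  set c₂ : ℝ := σ₀ ^ 2 / (32 * (n:ℝ)) with hc₂
  have hc₂pos : 0 < c₂ := by rw [hc₂]; positivity
  set δ₁ : ℝ := σ₀ ^ 2 * Real.sqrt n ^ (-((n:ℝ) + 2 * s)) * c₂ ^ (2 * s - 1) with hδ₁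
  set δ₂ : ℝ := σ₀ ^ 2 / (16 * (n:ℝ)) * (σ₀ / 4) ^ 2 *
    (2 * Real.sqrt n) ^ (-((n:ℝ) + 2 * s)) * (c₂ / 2) ^ (2 * s - 1) with hδ₂
  have hδ₁pos : 0 < δ₁ := by
    rw [hδ₁]
    have h1 : (0:ℝ) < Real.sqrt n ^ (-((n:ℝ) + 2 * s)) :=
      Real.rpow_pos_of_pos (Real.sqrt_pos.mpr hnR) _
    have h2 : (0:ℝ) < c₂ ^ (2 * s - 1) := Real.rpow_pos_of_pos hc₂pos _
    positivity
  have hδ₂pos : 0 < δ₂ := by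
    rw [hδ₂]
    have h1 : (0:ℝ) < (2 * Real.sqrt n) ^ (-((n:ℝ) + 2 * s)) :=
      Real.rpow_pos_of_pos (by positivity) _
    have h2 : (0:ℝ) < (c₂ / 2) ^ (2 * s - 1) := Real.rpow_pos_of_pos (by positivity) _
    positivity
  refine ⟨min δ₁ δ₂, lt_min hδ₁pos hδ₂pos, ?_⟩
  intro a h hh A D hA hD hdisj hAQ hDQ hAm hDm
  set δ : ℝ := min δ₁ δ₂ with hδdef
  have hδpos : 0 < δ := lt_min hδ₁pos hδ₂pos
  have hQvol : volume (Cube n a h) = ENNReal.ofReal (h ^ n) := volume_cube a hh.le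
  have hQtoReal : (volume (Cube n a h)).toReal = h ^ n := by
    rw [hQvol, ENNReal.toReal_ofReal (by positivity)]
  have hQpow : (h ^ n : ℝ) ^ (((n:ℝ) - 2 * s) / n) = h ^ ((n:ℝ) - 2 * s) := by
    rw [← Real.rpow_natCast h n, ← Real.rpow_mul hh.le]
    congr 1
    field_simp
  have hAm' : ENNReal.ofReal (σ₀ * h ^ n) ≤ volume A := by
    refine le_trans ?_ hAm
    rw [hQvol, ← ENNReal.ofReal_mul hσ.le]
    apply ENNReal.ofReal_le_ofReal
    have : σ₀ ≤ σ := min_le_left _ _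
    nlinarith [pow_pos hh n]
  have hDm' : ENNReal.ofReal (σ₀ * h ^ n) ≤ volume D := by
    refine le_trans ?_ hDm
    rw [hQvol, ← ENNReal.ofReal_mul hσ.le]
    apply ENNReal.ofReal_le_ofReal
    have : σ₀ ≤ σ := min_le_left _ _
    nlinarith [pow_pos hh n]
  set m : ℝ≥0∞ := volume (Cube n a h \ (A ∪ D)) with hm
  have hmfin : m ≠ ⊤ := by
    rw [hm]
    exact ((measure_mono Set.diff_subset).trans_lt (by rw [hQvol]; exact ofReal_lt_top)).ne
  set m' : ℝ := m.toReal with hm'def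
  by_cases hm0 : m = 0
  · -- |B| = 0 : left side is infinite, and so is Ldb
    have hLtop : Ldb n s A D = ⊤ := by
      by_contra hne
      set Cg : ℝ := σ₀ ^ 2 / (16 * (n:ℝ)) * (σ₀ / 4) ^ 2 *
        (2 * Real.sqrt n) ^ (-((n:ℝ) + 2 * s)) * h ^ ((n:ℝ) - 2 * s) with hCg
      have hCgpos : 0 < Cg := by
        rw [hCg]
        have h1 : (0:ℝ) < (2 * Real.sqrt n) ^ (-((n:ℝ) + 2 * s)) :=
          Real.rpow_pos_of_pos (by positivity) _
        have h2 : (0:ℝ) < h ^ ((n:ℝ) - 2 * s) := Real.rpow_pos_of_pos hh _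
        positivity
      have hbound : ∀ Mn : ℕ, 0 < Mn →
          ENNReal.ofReal (Cg * (Mn:ℝ) ^ (2 * s - 1)) ≤ Ldb n s A D := by
        intro Mn hMpos
        have hXm : (volume (Cube n a h \ (A ∪ D))).toReal ≤
            σ₀ ^ 2 / (32 * n) * h ^ n / Mn := by
          rw [← hm, hm0]
          simp only [ENNReal.toReal_zero]
          positivity
        have := core_scaled hn0 hMpos ⟨hs1, hs2⟩ hσ0 hσhalf a hh A D hA hD hdisj hAQ hDQ
          hAm' hDm' hXm
        refine le_trans (le_of_eq ?_) this
        rw [hCg]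
      set r : ℝ := (Ldb n s A D).toReal with hr
      set T : ℝ := max ((r + 1) / Cg) 1 with hT
      have hTpos : 0 < T := lt_of_lt_of_le one_pos (le_max_right _ _)
      set Mn : ℕ := ⌈T ^ (1 / (2 * s - 1))⌉₊ with hMn
      have hTr : 0 < T ^ (1 / (2 * s - 1)) := Real.rpow_pos_of_pos hTpos _
      have hMpos : 0 < Mn := Nat.ceil_pos.mpr hTr
      have h1 : T ^ (1 / (2 * s - 1)) ≤ (Mn:ℝ) := Nat.le_ceil _
      have h2 : T ≤ (Mn:ℝ) ^ (2 * s - 1) := by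
        have e : (T ^ (1 / (2 * s - 1))) ^ (2 * s - 1) = T := by
          rw [← Real.rpow_mul hTpos.le, one_div_mul_cancel (by linarith : 2 * s - 1 ≠ 0),
            Real.rpow_one]
        calc T = (T ^ (1 / (2 * s - 1))) ^ (2 * s - 1) := e.symm
          _ ≤ (Mn:ℝ) ^ (2 * s - 1) := Real.rpow_le_rpow hTr.le h1 (by linarith)
      have h3 : r + 1 ≤ Cg * (Mn:ℝ) ^ (2 * s - 1) := by
        have hT1 : (r + 1) / Cg ≤ T := le_max_left _ _
        have := le_trans hT1 h2
        calc r + 1 = Cg * ((r + 1) / Cg) := by field_simp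
          _ ≤ Cg * (Mn:ℝ) ^ (2 * s - 1) := by
              apply mul_le_mul_of_nonneg_left _ hCgpos.le
              exact le_trans hT1 h2
      have h4 := hbound Mn hMpos
      have h5 : Cg * (Mn:ℝ) ^ (2 * s - 1) ≤ r := by
        rw [hr]
        have := ENNReal.toReal_mono hne h4
        rwa [ENNReal.toReal_ofReal (by positivity)] at this
      linarith
    rw [hLtop]
    exact le_top
  · -- |B| > 0
    have hm'pos : 0 < m' := ENNReal.toReal_pos hm0 hmfin
    have hmeq : m = ENNReal.ofReal m' := (ENNReal.ofReal_toReal hmfin).symm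
    -- rewrite the RHS
    have hRHS : ENNReal.ofReal (δ * (volume (Cube n a h)).toReal ^ (((n:ℝ) - 2 * s) / n)) *
        (volume (Cube n a h) / volume (Cube n a h \ (A ∪ D))) ^ (2 * s - 1) =
        ENNReal.ofReal (δ * h ^ ((n:ℝ) - 2 * s) * (h ^ n / m') ^ (2 * s - 1)) := by
      rw [hQtoReal, hQpow, hQvol, ← hm, hmeq, ← ENNReal.ofReal_div_of_pos hm'pos,
        ENNReal.ofReal_rpow_of_pos (by positivity),
        ← ENNReal.ofReal_mul (by positivity)]
    rw [hRHS]
    by_cases hx1 : 1 ≤ c₂ * h ^ n / m'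
    · -- main case: choose the grid size
      set x : ℝ := c₂ * h ^ n / m' with hxdef
      have hxpos : 0 < x := lt_of_lt_of_le one_pos hx1
      set Mn : ℕ := ⌊x⌋₊ with hMndef
      have hMpos : 0 < Mn := by
        rw [hMndef]
        exact Nat.floor_pos.mpr hx1
      have hMR : (0:ℝ) < (Mn:ℝ) := by exact_mod_cast hMpos
      have hMx : (Mn:ℝ) ≤ x := Nat.floor_le hxpos.le
      have hxM : x ≤ 2 * Mn := by
        have h1 : x < Mn + 1 := Nat.lt_floor_add_one x
        have h2 : (1:ℝ) ≤ (Mn:ℝ) := by exact_mod_cast hMpos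
        linarith
      have hXm : (volume (Cube n a h \ (A ∪ D))).toReal ≤
          σ₀ ^ 2 / (32 * n) * h ^ n / Mn := by
        have h1 : (Mn:ℝ) * m' ≤ c₂ * h ^ n := by
          have h0 := hMx
          rw [hxdef] at h0
          calc (Mn:ℝ) * m' ≤ (c₂ * h ^ n / m') * m' := by nlinarith [hm'pos]
            _ = c₂ * h ^ n := by field_simp
        rw [hc₂] at h1
        show m' ≤ σ₀ ^ 2 / (32 * (n:ℝ)) * h ^ n / Mn
        rw [le_div_iff₀ hMR]
        linarith [h1]
      have hcore := core_scaled hn0 hMpos ⟨hs1, hs2⟩ hσ0 hσhalf a hh A D hA hD hdisj hAQ hDQ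
        hAm' hDm' hXm
      refine le_trans ?_ hcore
      apply ENNReal.ofReal_le_ofReal
      -- real inequality
      have e7 : x / 2 = (c₂ / 2) * (h ^ n / m') := by rw [hxdef]; ring
      have e8 : (x / 2) ^ (2 * s - 1) =
          (c₂ / 2) ^ (2 * s - 1) * (h ^ n / m') ^ (2 * s - 1) := by
        rw [e7, Real.mul_rpow (by positivity) (by positivity)]
      have e9 : (x / 2) ^ (2 * s - 1) ≤ (Mn:ℝ) ^ (2 * s - 1) :=
        Real.rpow_le_rpow (by positivity) (by linarith) (by linarith)
      have hhpow : (0:ℝ) < h ^ ((n:ℝ) - 2 * s) := Real.rpow_pos_of_pos hh _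
      have hratio : (0:ℝ) ≤ (h ^ n / m') ^ (2 * s - 1) := Real.rpow_nonneg (by positivity) _
      calc δ * h ^ ((n:ℝ) - 2 * s) * (h ^ n / m') ^ (2 * s - 1)
          ≤ δ₂ * h ^ ((n:ℝ) - 2 * s) * (h ^ n / m') ^ (2 * s - 1) :=
            mul_le_mul_of_nonneg_right
              (mul_le_mul_of_nonneg_right (min_le_right _ _) hhpow.le) hratio
        _ = σ₀ ^ 2 / (16 * (n:ℝ)) * (σ₀ / 4) ^ 2 *
            (2 * Real.sqrt n) ^ (-((n:ℝ) + 2 * s)) * h ^ ((n:ℝ) - 2 * s) *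
            (x / 2) ^ (2 * s - 1) := by
            rw [hδ₂, e8]; ring
        _ ≤ σ₀ ^ 2 / (16 * (n:ℝ)) * (σ₀ / 4) ^ 2 *
            (2 * Real.sqrt n) ^ (-((n:ℝ) + 2 * s)) * h ^ ((n:ℝ) - 2 * s) *
            (Mn:ℝ) ^ (2 * s - 1) := by
            have hC : (0:ℝ) ≤ σ₀ ^ 2 / (16 * (n:ℝ)) * (σ₀ / 4) ^ 2 *
                (2 * Real.sqrt n) ^ (-((n:ℝ) + 2 * s)) * h ^ ((n:ℝ) - 2 * s) := by
              have h1 : (0:ℝ) ≤ (2 * Real.sqrt n) ^ (-((n:ℝ) + 2 * s)) :=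
                Real.rpow_nonneg (by positivity) _
              positivity
            exact mul_le_mul_of_nonneg_left e9 hC
    · -- trivial case: |B| is a definite fraction of the cube
      push_neg at hx1
      have hc2m : c₂ * h ^ n < m' := by
        rw [div_lt_one hm'pos] at hx1
        exact hx1
      have hratio : h ^ n / m' ≤ 1 / c₂ := by
        rw [div_le_div_iff₀ hm'pos hc₂pos]
        nlinarith [pow_pos hh n]
      have htriv := trivial_bound hn0 ⟨hs1, hs2⟩ hσ0 a hh A D hA hD hdisj hAQ hDQ hAm' hDm'
      refine le_trans ?_ htriv
      apply ENNReal.ofReal_le_ofReal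
      have hsplit : (h * Real.sqrt n) ^ (-((n:ℝ) + 2 * s)) =
          Real.sqrt n ^ (-((n:ℝ) + 2 * s)) * h ^ (-((n:ℝ) + 2 * s)) := by
        rw [show h * Real.sqrt n = Real.sqrt n * h by ring,
          Real.mul_rpow (Real.sqrt_nonneg _) hh.le]
      have hh2n : (h:ℝ) ^ n * h ^ n * h ^ (-((n:ℝ) + 2 * s)) = h ^ ((n:ℝ) - 2 * s) := by
        rw [← Real.rpow_natCast h n, ← Real.rpow_add hh, ← Real.rpow_add hh]
        congr 1
        ring
      have hc₂rpow : c₂ ^ (2 * s - 1) * (1 / c₂) ^ (2 * s - 1) = 1 := by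
        rw [← Real.mul_rpow hc₂pos.le (by positivity)]
        rw [mul_one_div_cancel hc₂pos.ne', Real.one_rpow]
      have hmono : (h ^ n / m') ^ (2 * s - 1) ≤ (1 / c₂) ^ (2 * s - 1) :=
        Real.rpow_le_rpow (by positivity) hratio (by linarith)
      have hsq : (0:ℝ) ≤ Real.sqrt n ^ (-((n:ℝ) + 2 * s)) :=
        Real.rpow_nonneg (Real.sqrt_nonneg _) _
      have hhpow : (0:ℝ) < h ^ ((n:ℝ) - 2 * s) := Real.rpow_pos_of_pos hh _
      calc δ * h ^ ((n:ℝ) - 2 * s) * (h ^ n / m') ^ (2 * s - 1)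
          ≤ δ₁ * h ^ ((n:ℝ) - 2 * s) * (1 / c₂) ^ (2 * s - 1) := by
            have h2 : (0:ℝ) ≤ (h ^ n / m') ^ (2 * s - 1) :=
              Real.rpow_nonneg (by positivity) _
            calc δ * h ^ ((n:ℝ) - 2 * s) * (h ^ n / m') ^ (2 * s - 1)
                ≤ δ₁ * h ^ ((n:ℝ) - 2 * s) * (h ^ n / m') ^ (2 * s - 1) :=
                  mul_le_mul_of_nonneg_right
                    (mul_le_mul_of_nonneg_right (min_le_left _ _) hhpow.le) h2
              _ ≤ δ₁ * h ^ ((n:ℝ) - 2 * s) * (1 / c₂) ^ (2 * s - 1) :=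
                  mul_le_mul_of_nonneg_left hmono
                    (mul_nonneg hδ₁pos.le hhpow.le)
        _ = σ₀ ^ 2 * Real.sqrt n ^ (-((n:ℝ) + 2 * s)) * h ^ ((n:ℝ) - 2 * s) *
            (c₂ ^ (2 * s - 1) * (1 / c₂) ^ (2 * s - 1)) := by
            rw [hδ₁]; ring
        _ = σ₀ ^ 2 * Real.sqrt n ^ (-((n:ℝ) + 2 * s)) * h ^ ((n:ℝ) - 2 * s) := by
            rw [hc₂rpow, mul_one]
        _ = σ₀ * h ^ n * (σ₀ * h ^ n * (h * Real.sqrt n) ^ (-((n:ℝ) + 2 * s))) := by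
            rw [hsplit, ← hh2n]; ring
end
end

section
/- Pointwise Sobolev-type inequality: let n ≥ 1 and s ∈ (0,1). There exists a constant c(n,s) > 0 such that for every x ∈ ℝ^n and every measurable set E ⊆ ℝ^n with 0 < |E| < ∞, one has ∫_{ℝ^n ∖ E} |x−y|^{−(n+2s)} dy ≥ c(n,s) |E|^{−2s/n}. -/
open MeasureTheory ENNReal

noncomputable section

/-- pointwise Sobolev-type inequality:
`∫_{ℝ^n∖E} |x-y|^{-(n+2s)} dy ≥ c(n,s) |E|^{-2s/n}`. -/
theorem pointwise_sobolev (n : ℕ) (hn : 1 ≤ n) (s : ℝ) (hs : s ∈ Set.Ioo (0 : ℝ) 1) :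
    ∃ c : ℝ, 0 < c ∧ ∀ (x : Spc n) (E : Set (Spc n)), MeasurableSet E →
      0 < volume E → volume E < ⊤ →
      ENNReal.ofReal (c * (volume E).toReal ^ (-(2 * s) / n)) ≤
        ∫⁻ y in Eᶜ, ENNReal.ofReal (‖x - y‖ ^ (-((n : ℝ) + 2 * s))) := by
  have hnpos : (0 : ℝ) < n := by exact_mod_cast Nat.lt_of_lt_of_le Nat.zero_lt_one hn
  have hn0 : (n : ℝ) ≠ 0 := hnpos.ne'
  haveI : Nontrivial (Spc n) := by
    have : 1 ≤ n := hn
    exact ⟨EuclideanSpace.single ⟨0, this⟩ 1, 0, by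
      intro h
      have := congrFun (congrArg (fun f : EuclideanSpace ℝ (Fin n) => (f : Fin n → ℝ)) h) ⟨0, this⟩
      simp [EuclideanSpace.single] at this⟩
  set ω : ℝ := (volume (Metric.ball (0 : Spc n) 1)).toReal with hωdef
  have hωball : volume (Metric.ball (0 : Spc n) 1) = ENNReal.ofReal ω := by
    rw [hωdef, ENNReal.ofReal_toReal (measure_ball_lt_top).ne]
  have hω : 0 < ω := by
    rw [hωdef]
    exact ENNReal.toReal_pos (Metric.measure_ball_pos volume 0 one_pos).ne' measure_ball_lt_top.ne
  set e : ℝ := -(((n : ℝ) + 2 * s) / n) with hedef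
  refine ⟨(2 / ω) ^ e, Real.rpow_pos_of_pos (by positivity) _, ?_⟩
  intro x E hE hE0 hEtop
  set V : ℝ := (volume E).toReal with hVdef
  have hV : 0 < V := ENNReal.toReal_pos hE0.ne' hEtop.ne
  have hEV : volume E = ENNReal.ofReal V := (ENNReal.ofReal_toReal hEtop.ne).symm
  set r : ℝ := (2 * V / ω) ^ (1 / (n : ℝ)) with hrdef
  have hbase : (0 : ℝ) < 2 * V / ω := by positivity
  have hr : 0 < r := Real.rpow_pos_of_pos hbase _
  have hrn : r ^ n = 2 * V / ω := by
    rw [hrdef, ← Real.rpow_natCast ((2 * V / ω) ^ (1 / (n : ℝ))) n, ← Real.rpow_mul hbase.le,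
      one_div_mul_cancel hn0, Real.rpow_one]
  have hball : volume (Metric.ball x r) = ENNReal.ofReal (2 * V) := by
    rw [Measure.addHaar_ball volume x hr.le, finrank_euclideanSpace_fin, hrn, hωball,
      ← ENNReal.ofReal_mul (by positivity), div_mul_cancel₀ _ hω.ne']
  -- measure of the ball minus E
  have hvol : ENNReal.ofReal V ≤ volume (Metric.ball x r \ E) := by
    refine le_trans ?_ le_measure_diff
    rw [hball, hEV]
    have : ENNReal.ofReal (2 * V) = ENNReal.ofReal V + ENNReal.ofReal V := by
      rw [← ENNReal.ofReal_add hV.le hV.le]; ring_nf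
    rw [this, ENNReal.add_sub_cancel_right ENNReal.ofReal_ne_top]
  set S : Set (Spc n) := (Metric.ball x r \ E) \ {x} with hSdef
  have hSvol : volume S = volume (Metric.ball x r \ E) := by
    rw [hSdef]
    exact measure_diff_null (measure_singleton x)
  have hSsub : S ⊆ Eᶜ := fun y hy => hy.1.2
  have hfmeas : Measurable fun y : Spc n =>
      ENNReal.ofReal (‖x - y‖ ^ (-((n : ℝ) + 2 * s))) := by
    fun_prop
  have hC : ∀ y ∈ S, ENNReal.ofReal (r ^ (-((n : ℝ) + 2 * s))) ≤
      ENNReal.ofReal (‖x - y‖ ^ (-((n : ℝ) + 2 * s))) := by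
    intro y hy
    apply ENNReal.ofReal_le_ofReal
    have h1 : 0 < ‖x - y‖ := by
      rw [norm_pos_iff, sub_ne_zero]
      exact fun h => hy.2 (by simp [h.symm])
    have h2 : ‖x - y‖ ≤ r := by
      have := hy.1.1
      rw [Metric.mem_ball, dist_eq_norm] at this
      rw [norm_sub_rev]
      exact this.le
    exact Real.rpow_le_rpow_of_nonpos h1 h2 (by nlinarith [hs.1])
  calc ENNReal.ofReal ((2 / ω) ^ e * V ^ (-(2 * s) / n))
      = ENNReal.ofReal (r ^ (-((n : ℝ) + 2 * s)) * V) := by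
        congr 1
        have hre : r ^ (-((n : ℝ) + 2 * s)) = (2 / ω) ^ e * V ^ e := by
          have h1 : r ^ (-((n : ℝ) + 2 * s)) = (2 * V / ω) ^ e := by
            rw [hrdef, ← Real.rpow_mul hbase.le]
            congr 1
            rw [hedef]; ring
          rw [h1, show 2 * V / ω = (2 / ω) * V by ring,
            Real.mul_rpow (by positivity) hV.le]
        rw [hre, mul_assoc]
        congr 1
        rw [← Real.rpow_add_one hV.ne']
        rw [hedef]
        field_simp
        congr 1; ring
    _ = ENNReal.ofReal (r ^ (-((n : ℝ) + 2 * s))) * ENNReal.ofReal V := by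
        rw [ENNReal.ofReal_mul (by positivity)]
    _ ≤ ENNReal.ofReal (r ^ (-((n : ℝ) + 2 * s))) * volume S := by
        rw [hSvol]; exact mul_le_mul_right hvol _
    _ = ∫⁻ _ in S, ENNReal.ofReal (r ^ (-((n : ℝ) + 2 * s))) := by
        rw [setLIntegral_const, mul_comm]
    _ ≤ ∫⁻ y in S, ENNReal.ofReal (‖x - y‖ ^ (-((n : ℝ) + 2 * s))) :=
        setLIntegral_mono hfmeas hC
    _ ≤ ∫⁻ y in Eᶜ, ENNReal.ofReal (‖x - y‖ ^ (-((n : ℝ) + 2 * s))) :=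
        lintegral_mono_set hSsub
end
end

section
/- Sobolev-type inequality for pairs of sets: let n ≥ 1 and s ∈ (0,1). There exists a constant c(n,s) > 0 such that for all measurable sets E, F ⊆ ℝ^n with 0 < |E| < ∞ and |F| < ∞, one has ∫_F ∫_{ℝ^n ∖ E} |x−y|^{−(n+2s)} dy dx ≥ c(n,s) |F| |E|^{−2s/n}. -/
open MeasureTheory ENNReal

noncomputable section

/-- Sobolev-type inequality for pairs of sets:
`∫_F ∫_{ℝ^n∖E} |x-y|^{-(n+2s)} dy dx ≥ c(n,s) |F| |E|^{-2s/n}`. -/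
theorem pair_sobolev (n : ℕ) (hn : 1 ≤ n) (s : ℝ) (hs : s ∈ Set.Ioo (0 : ℝ) 1) :
    ∃ c : ℝ, 0 < c ∧ ∀ E F : Set (Spc n), MeasurableSet E → MeasurableSet F →
      0 < volume E → volume E < ⊤ → volume F < ⊤ →
      ENNReal.ofReal (c * (volume F).toReal * (volume E).toReal ^ (-(2 * s) / n)) ≤
        ∫⁻ x in F, ∫⁻ y in Eᶜ, ENNReal.ofReal (‖x - y‖ ^ (-((n : ℝ) + 2 * s))) := by
  obtain ⟨hs0, hs1⟩ := hs
  have hn' : (0:ℝ) < n := by exact_mod_cast hn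
  haveI : Nontrivial (Spc n) := Module.nontrivial_of_finrank_pos
    (by rw [finrank_euclideanSpace_fin]; omega : 0 < Module.finrank ℝ (Spc n))
  set ω : ℝ := (volume (Metric.ball (0:Spc n) 1)).toReal with hω
  have hωball_pos : 0 < volume (Metric.ball (0:Spc n) 1) :=
    Metric.measure_ball_pos _ _ one_pos
  have hωball_lt : volume (Metric.ball (0:Spc n) 1) < ⊤ := measure_ball_lt_top
  have hω_pos : 0 < ω := ENNReal.toReal_pos hωball_pos.ne' hωball_lt.ne
  set p : ℝ := (n:ℝ) + 2*s with hp
  have hp_pos : 0 < p := by positivity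
  refine ⟨(2/ω) ^ (-(p/n)), Real.rpow_pos_of_pos (by positivity) _, ?_⟩
  intro E F hE hF hE0 hEfin hFfin
  set e : ℝ := (volume E).toReal with he
  have he_pos : 0 < e := ENNReal.toReal_pos hE0.ne' hEfin.ne
  have hvolE : volume E = ENNReal.ofReal e := (ENNReal.ofReal_toReal hEfin.ne).symm
  set R : ℝ := (2*e/ω) ^ ((1:ℝ)/n) with hR
  have hbase : 0 < 2*e/ω := by positivity
  have hR_pos : 0 < R := Real.rpow_pos_of_pos hbase _
  have hRp_nonneg : 0 ≤ R ^ (-p) := (Real.rpow_pos_of_pos hR_pos _).le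
  -- key pointwise bound for the inner integral
  have key : ∀ x : Spc n,
      ENNReal.ofReal (R ^ (-p) * e) ≤ ∫⁻ y in Eᶜ, ENNReal.ofReal (‖x - y‖ ^ (-p)) := by
    intro x
    set B := Metric.ball x R with hB
    have hvolB : volume B = 2 * volume E := by
      rw [hB, Measure.addHaar_ball_of_pos volume x hR_pos]
      have hfr : Module.finrank ℝ (Spc n) = n := finrank_euclideanSpace_fin
      have hRn : R ^ Module.finrank ℝ (Spc n) = 2*e/ω := by
        rw [hfr, ← Real.rpow_natCast R n, hR, ← Real.rpow_mul hbase.le,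
          one_div, inv_mul_cancel₀ hn'.ne', Real.rpow_one]
      rw [hRn, hvolE]
      have hωeq : volume (Metric.ball (0:Spc n) 1) = ENNReal.ofReal ω :=
        (ENNReal.ofReal_toReal hωball_lt.ne).symm
      rw [hωeq, ← ENNReal.ofReal_mul hbase.le, div_mul_cancel₀ _ hω_pos.ne',
        show (2:ℝ)*e = 2*e from rfl, ENNReal.ofReal_mul (by norm_num : (0:ℝ) ≤ 2)]
      norm_num
    -- the set where we integrate
    set S : Set (Spc n) := (B \ E) \ {x} with hSdef
    have hS_meas : MeasurableSet S :=
      ((Metric.isOpen_ball.measurableSet.diff hE).diff (measurableSet_singleton x))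
    have hS_sub : S ⊆ Eᶜ := fun y hy => hy.1.2
    have hS_vol : volume E ≤ volume S := by
      have h1 : volume S = volume (B \ E) :=
        measure_diff_null (measure_singleton x)
      have h2 : volume B ≤ volume (B \ E) + volume E := by
        refine le_trans (measure_mono ?_) (measure_union_le _ _)
        intro y hy
        by_cases hyE : y ∈ E
        · exact Or.inr hyE
        · exact Or.inl ⟨hy, hyE⟩
      rw [hvolB, two_mul] at h2
      rw [h1]
      exact (ENNReal.add_le_add_iff_right hEfin.ne).mp h2
    calc ENNReal.ofReal (R ^ (-p) * e)
        = ENNReal.ofReal (R ^ (-p)) * volume E := by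
          rw [ENNReal.ofReal_mul hRp_nonneg, hvolE]
      _ ≤ ENNReal.ofReal (R ^ (-p)) * volume S := mul_le_mul' le_rfl hS_vol
      _ = ∫⁻ _ in S, ENNReal.ofReal (R ^ (-p)) := (setLIntegral_const _ _).symm
      _ ≤ ∫⁻ y in S, ENNReal.ofReal (‖x - y‖ ^ (-p)) := by
          refine setLIntegral_mono' hS_meas fun y hy => ?_
          refine ENNReal.ofReal_le_ofReal ?_
          have hxy : y ≠ x := fun h => hy.2 (by simp [h])
          have hpos : 0 < ‖x - y‖ := by
            rw [norm_pos_iff, sub_ne_zero]; exact fun h => hxy h.symm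
          have hlt : ‖x - y‖ ≤ R := by
            have := hy.1.1
            rw [hB, Metric.mem_ball, dist_comm] at this
            have : dist x y < R := this
            rw [dist_eq_norm] at this
            exact this.le
          exact Real.rpow_le_rpow_of_nonpos hpos hlt (neg_nonpos.mpr hp_pos.le)
      _ ≤ ∫⁻ y in Eᶜ, ENNReal.ofReal (‖x - y‖ ^ (-p)) := lintegral_mono_set hS_sub
  -- algebra: R^(-p) * e = c * e^(-(2s)/n)
  have halg : (2/ω) ^ (-(p/n)) * e ^ (-(2*s)/n) = R ^ (-p) * e := by
    have hRpow : R ^ (-p) = (2*e/ω) ^ (-(p/n)) := by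
      rw [hR, ← Real.rpow_mul hbase.le]
      congr 1
      field_simp
    rw [hRpow]
    have h2e : 2*e/ω = (2/ω) * e := by ring
    rw [h2e, Real.mul_rpow (by positivity) he_pos.le]
    have hee : e ^ (-(p/n)) * e = e ^ (-(p/n) + 1) := by
      rw [Real.rpow_add he_pos, Real.rpow_one]
    rw [mul_assoc, hee]
    congr 2
    rw [hp]
    field_simp
    ring
  have hvolF : volume F = ENNReal.ofReal (volume F).toReal :=
    (ENNReal.ofReal_toReal hFfin.ne).symm
  calc ENNReal.ofReal ((2/ω) ^ (-(p/n)) * (volume F).toReal * e ^ (-(2*s)/n))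
      = ENNReal.ofReal (R ^ (-p) * e * (volume F).toReal) := by
        congr 1
        rw [← halg]; ring
    _ = ENNReal.ofReal (R ^ (-p) * e) * volume F := by
        rw [ENNReal.ofReal_mul (by positivity), ← hvolF]
    _ = ∫⁻ _ in F, ENNReal.ofReal (R ^ (-p) * e) := (setLIntegral_const _ _).symm
    _ ≤ ∫⁻ x in F, ∫⁻ y in Eᶜ, ENNReal.ofReal (‖x - y‖ ^ (-p)) :=
        setLIntegral_mono' hF fun x _ => key x
end
end

section
/- Fractional isoperimetric-type inequality: let n ≥ 1 and s ∈ (0,1). There exists a constant c(n,s) > 0 such that for every measurable set E ⊆ ℝ^n with 0 < |E| < ∞, one has ∫_E ∫_{ℝ^n ∖ E} |x−y|^{−(n+2s)} dy dx ≥ c(n,s) |E|^{(n−2s)/n}. -/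
open MeasureTheory ENNReal Metric

noncomputable section

/-- fractional isoperimetric-type inequality:
`∫_E ∫_{ℝ^n∖E} |x-y|^{-(n+2s)} dy dx ≥ c(n,s) |E|^{(n-2s)/n}`. -/
theorem fractional_isoperimetric (n : ℕ) (hn : 1 ≤ n) (s : ℝ) (hs : s ∈ Set.Ioo (0 : ℝ) 1) :
    ∃ c : ℝ, 0 < c ∧ ∀ E : Set (Spc n), MeasurableSet E →
      0 < volume E → volume E < ⊤ →
      ENNReal.ofReal (c * (volume E).toReal ^ (((n : ℝ) - 2 * s) / n)) ≤
        ∫⁻ x in E, ∫⁻ y in Eᶜ, ENNReal.ofReal (‖x - y‖ ^ (-((n : ℝ) + 2 * s))) := by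
  haveI : Nonempty (Fin n) := ⟨⟨0, hn⟩⟩
  haveI : Nontrivial (Spc n) := inferInstance
  have hn0 : (0:ℝ) < n := by exact_mod_cast hn
  set ωE : ℝ≥0∞ := volume (ball (0 : Spc n) 1) with hωE
  set ω : ℝ := ωE.toReal with hωdef
  have hωfin : ωE < ⊤ := measure_ball_lt_top
  have hω : 0 < ω := ENNReal.toReal_pos (measure_ball_pos _ _ one_pos).ne' hωfin.ne
  have hωE_eq : ωE = ENNReal.ofReal ω := (ENNReal.ofReal_toReal hωfin.ne).symm
  set a : ℝ := -((n:ℝ) + 2*s) with ha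
  have hapos : (0:ℝ) < (n:ℝ) + 2*s := by nlinarith [hs.1]
  have ha0 : a ≤ 0 := by rw [ha]; linarith
  refine ⟨((2:ℝ)/ω) ^ (a/n), Real.rpow_pos_of_pos (by positivity) _, ?_⟩
  intro E hE hE0 hEfin
  set m : ℝ := (volume E).toReal with hmdef
  have hm : 0 < m := ENNReal.toReal_pos hE0.ne' hEfin.ne
  have hvolE : volume E = ENNReal.ofReal m := (ENNReal.ofReal_toReal hEfin.ne).symm
  set R : ℝ := (2*m/ω) ^ ((1:ℝ)/n) with hRdef
  have hR : 0 < R := Real.rpow_pos_of_pos (by positivity) _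
  -- volume of the ball of radius R is 2m
  have hball : ∀ x : Spc n, volume (ball x R) = ENNReal.ofReal (2*m) := by
    intro x
    rw [Measure.addHaar_ball volume x hR.le, finrank_euclideanSpace_fin]
    have hRn : R ^ n = 2*m/ω := by
      rw [← Real.rpow_natCast R n, hRdef, ← Real.rpow_mul (by positivity),
        one_div, inv_mul_cancel₀ hn0.ne', Real.rpow_one]
    rw [hRn, ← hωE, hωE_eq, ← ENNReal.ofReal_mul (by positivity),
      div_mul_cancel₀ _ hω.ne']
  -- inner integral lower bound, for every x
  have key : ∀ x : Spc n,
      ENNReal.ofReal (R ^ a) * volume E ≤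
        ∫⁻ y in Eᶜ, ENNReal.ofReal (‖x - y‖ ^ a) := by
    intro x
    set S : Set (Spc n) := Eᶜ ∩ ball x R with hSdef
    have hS : MeasurableSet S := hE.compl.inter measurableSet_ball
    -- measure bound : volume E ≤ volume S
    have hmeas : volume E ≤ volume S := by
      have h1 : volume (ball x R ∩ E) + volume (ball x R \ E) = volume (ball x R) :=
        measure_inter_add_diff _ hE
      have h2 : ball x R \ E = S := by
        rw [hSdef, Set.diff_eq, Set.inter_comm]
      rw [h2, hball x] at h1
      have h3 : ENNReal.ofReal m + ENNReal.ofReal m ≤ ENNReal.ofReal m + volume S := by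
        calc ENNReal.ofReal m + ENNReal.ofReal m = ENNReal.ofReal (2*m) := by
              rw [← ENNReal.ofReal_add hm.le hm.le]; ring_nf
          _ = volume (ball x R ∩ E) + volume S := h1.symm
          _ ≤ ENNReal.ofReal m + volume S := by
              gcongr
              calc volume (ball x R ∩ E) ≤ volume E := measure_mono Set.inter_subset_right
                _ = ENNReal.ofReal m := hvolE
      rw [hvolE]
      exact (ENNReal.add_le_add_iff_left ENNReal.ofReal_ne_top).mp h3
    have hx : ∀ᵐ y : Spc n, y ≠ x := by
      have : volume ({x} : Set (Spc n)) = 0 := measure_singleton x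
      simpa [ae_iff] using this
    have hpt : ∀ᵐ y ∂(volume.restrict S),
        ENNReal.ofReal (R ^ a) ≤ ENNReal.ofReal (‖x - y‖ ^ a) := by
      filter_upwards [ae_restrict_mem hS, ae_restrict_of_ae hx] with y hyS hyx
      apply ENNReal.ofReal_le_ofReal
      apply Real.rpow_le_rpow_of_nonpos
      · exact norm_sub_pos_iff.mpr (Ne.symm hyx)
      · have : dist y x < R := mem_ball.mp hyS.2
        calc ‖x - y‖ = dist x y := (dist_eq_norm x y).symm
          _ = dist y x := dist_comm x y
          _ ≤ R := this.le
      · exact ha0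
    calc ENNReal.ofReal (R ^ a) * volume E
        ≤ ENNReal.ofReal (R ^ a) * volume S := by gcongr
      _ = ∫⁻ _ in S, ENNReal.ofReal (R ^ a) := (setLIntegral_const _ _).symm
      _ ≤ ∫⁻ y in S, ENNReal.ofReal (‖x - y‖ ^ a) := lintegral_mono_ae hpt
      _ ≤ ∫⁻ y in Eᶜ, ENNReal.ofReal (‖x - y‖ ^ a) :=
          lintegral_mono_set Set.inter_subset_left
  -- outer integral
  have houter : (ENNReal.ofReal (R ^ a) * volume E) * volume E ≤
      ∫⁻ x in E, ∫⁻ y in Eᶜ, ENNReal.ofReal (‖x - y‖ ^ a) := by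
    calc (ENNReal.ofReal (R ^ a) * volume E) * volume E
        = ∫⁻ _ in E, ENNReal.ofReal (R ^ a) * volume E := (setLIntegral_const _ _).symm
      _ ≤ ∫⁻ x in E, ∫⁻ y in Eᶜ, ENNReal.ofReal (‖x - y‖ ^ a) :=
          lintegral_mono (fun x => key x)
  -- the algebra
  have halg : (2/ω) ^ (a/n) * m ^ (((n : ℝ) - 2 * s) / n) = R ^ a * m * m := by
    have hRa : R ^ a = (2/ω) ^ (a/n) * m ^ (a/n) := by
      rw [hRdef, ← Real.rpow_mul (by positivity), one_div_mul_eq_div,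
        show 2*m/ω = (2/ω)*m by ring, Real.mul_rpow (by positivity) hm.le]
    have hmm : m ^ (a/n) * m * m = m ^ (((n:ℝ) - 2*s)/n) := by
      have h1 : m ^ (a/n) * m * m = m ^ (a/n + 1 + 1) := by
        rw [Real.rpow_add hm, Real.rpow_add hm, Real.rpow_one]
      rw [h1]
      congr 1
      field_simp [ha]
      ring
    rw [hRa, mul_assoc, mul_assoc, ← mul_assoc (m ^ (a/n)), hmm]
  refine le_trans (le_of_eq ?_) houter
  rw [hvolE, ← ENNReal.ofReal_mul (by positivity), ← ENNReal.ofReal_mul (by positivity),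
    halg]
end
end
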